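/- arXiv:1812.03688 — 4 statements merged into one kernel-verified Lean document; each statement's English description precedes it below -/
import Mathlib

section
/- Let ω ∈ [0,1], let Q = [[D, −C], [−B, A]] with Q_ω a nonsingular M-matrix and Q_ω·1 > 0, let Q̃ = [[D̃, −C̃], [−B̃, Ã]] be a real nonsingular M-matrix with Q̃ ≤ Q_ω and Q̃·1 > 0, let Φ̃ be the minimal nonnegative solution of XC̃X − XD̃ − ÃX + B̃ = 0, and let Φ be the unique solution of XCX − XD − AX + B = 0 with |Φ| ≤ Φ̃. Let Φ_k and Φ̃_k be the Newton sequences defined by Φ₀ = 0, (A − Φ_kC)Φ_{k+1} + Φ_{k+1}(D − CΦ_k) = B − Φ_kCΦ_k and Φ̃₀ = 0, (Ã − Φ̃_kC̃)Φ̃_{k+1} + Φ̃_{k+1}(D̃ − C̃Φ̃_k) = B̃ − Φ̃_kC̃Φ̃_k. Then |Φ − Φ_k| ≤ Φ̃ − Φ̃_k entrywise for all k, and Φ_k converges to Φ. -/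
open Matrix Filter Kronecker

noncomputable section

/-- The ω-weighted linear functional `z ↦ ω·Re z + (1-ω)·Im z`. -/
def wlin (ω : ℝ) (z : ℂ) : ℝ := ω * z.re + (1 - ω) * z.im

/-- The ω-comparison matrix of a complex square matrix. -/
def omegaComp {N : Type*} [DecidableEq N] (ω : ℝ) (B : Matrix N N ℂ) : Matrix N N ℝ :=
  Matrix.of fun i j => if i = j then wlin ω (B i i) else -‖B i j‖

/-- A real square matrix is a nonsingular M-matrix: nonpositive off-diagonal entries and
`M *ᵥ u > 0` entrywise for some entrywise positive `u`. -/
def IsNonsingMMatrix {N : Type*} [Fintype N] (M : Matrix N N ℝ) : Prop :=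
  (∀ i j, i ≠ j → M i j ≤ 0) ∧ ∃ u : N → ℝ, (∀ i, 0 < u i) ∧ ∀ i, 0 < (M *ᵥ u) i

/-- Entrywise absolute value of a complex matrix. -/
def cabs {α β : Type*} (M : Matrix α β ℂ) : Matrix α β ℝ :=
  Matrix.of fun i j => ‖M i j‖


lemma wlin_le_abs {ω : ℝ} (hω : ω ∈ Set.Icc (0:ℝ) 1) (z : ℂ) : wlin ω z ≤ ‖z‖ := by
  obtain ⟨h0, h1⟩ := hω
  have hre : z.re ≤ ‖z‖ := Complex.re_le_norm z
  have him : z.im ≤ ‖z‖ := le_trans (le_abs_self _) (Complex.abs_im_le_norm z)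
  have h2 : ω * z.re ≤ ω * ‖z‖ := mul_le_mul_of_nonneg_left hre h0
  have h3 : (1 - ω) * z.im ≤ (1 - ω) * ‖z‖ :=
    mul_le_mul_of_nonneg_left him (by linarith)
  have : wlin ω z ≤ ω * ‖z‖ + (1 - ω) * ‖z‖ := add_le_add h2 h3
  calc wlin ω z ≤ ω * ‖z‖ + (1 - ω) * ‖z‖ := this
    _ = ‖z‖ := by ring

lemma wlin_add (ω : ℝ) (z w : ℂ) : wlin ω (z + w) = wlin ω z + wlin ω w := by
  simp [wlin]; ring

lemma wlin_sub (ω : ℝ) (z w : ℂ) : wlin ω (z - w) = wlin ω z - wlin ω w := by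
  simp [wlin]; ring

lemma cabs_mul_le {a b c : Type*} [Fintype b]
    {X : Matrix a b ℂ} {Y : Matrix b c ℂ} {X' : Matrix a b ℝ} {Y' : Matrix b c ℝ}
    (hX : ∀ i j, ‖X i j‖ ≤ X' i j) (hY : ∀ i j, ‖Y i j‖ ≤ Y' i j) :
    ∀ i j, ‖(X * Y) i j‖ ≤ (X' * Y') i j := by
  intro i j
  calc ‖(X * Y) i j‖ = ‖∑ k, X i k * Y k j‖ := by rw [Matrix.mul_apply]
    _ ≤ ∑ k, ‖X i k * Y k j‖ :=
        norm_sum_le _ _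
    _ ≤ (X' * Y') i j := by
        rw [Matrix.mul_apply]
        refine Finset.sum_le_sum fun k _ => ?_
        rw [norm_mul]
        exact mul_le_mul (hX i k) (hY k j) (norm_nonneg _) (le_trans (norm_nonneg _) (hX i k))

/-- entrywise product bounds for real matrices -/
lemma mul_nonneg_ent {a b c : Type*} [Fintype b]
    {X : Matrix a b ℝ} {Y : Matrix b c ℝ}
    (hX : ∀ i j, 0 ≤ X i j) (hY : ∀ i j, 0 ≤ Y i j) : ∀ i j, 0 ≤ (X * Y) i j := by
  intro i j
  rw [Matrix.mul_apply]
  exact Finset.sum_nonneg fun k _ => mul_nonneg (hX i k) (hY k j)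

lemma mul_le_mul_ent {a b c : Type*} [Fintype b]
    {X X' : Matrix a b ℝ} {Y Y' : Matrix b c ℝ}
    (hX0 : ∀ i j, 0 ≤ X i j) (hY0 : ∀ i j, 0 ≤ Y i j)
    (hX : ∀ i j, X i j ≤ X' i j) (hY : ∀ i j, Y i j ≤ Y' i j) :
    ∀ i j, (X * Y) i j ≤ (X' * Y') i j := by
  intro i j
  rw [Matrix.mul_apply, Matrix.mul_apply]
  exact Finset.sum_le_sum fun k _ =>
    mul_le_mul (hX i k) (hY k j) (hY0 k j) (le_trans (hX0 i k) (hX i k))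

lemma mulVec_nonneg_ent {a b : Type*} [Fintype b] {X : Matrix a b ℝ} {v : b → ℝ}
    (hX : ∀ i j, 0 ≤ X i j) (hv : ∀ j, 0 ≤ v j) : ∀ i, 0 ≤ (X *ᵥ v) i := by
  intro i
  exact Finset.sum_nonneg fun k _ => mul_nonneg (hX i k) (hv k)

lemma mulVec_le_mulVec {a b : Type*} [Fintype b]
    {X X' : Matrix a b ℝ} {v v' : b → ℝ}
    (hX0 : ∀ i j, 0 ≤ X i j) (hv0 : ∀ j, 0 ≤ v j)
    (hX : ∀ i j, X i j ≤ X' i j) (hv : ∀ j, v j ≤ v' j) :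
    ∀ i, (X *ᵥ v) i ≤ (X' *ᵥ v') i := by
  intro i
  exact Finset.sum_le_sum fun k _ =>
    mul_le_mul (hX i k) (hv k) (hv0 k) (le_trans (hX0 i k) (hX i k))

/-- If `M` is a Z-matrix with a positive vector `u` such that `M *ᵥ u` is positive, then
`M *ᵥ x` nonnegative implies `x` nonnegative. -/
lemma zmat_mulVec_nonneg {N : Type*} [Fintype N] [DecidableEq N] {M : Matrix N N ℝ}
    (hZ : ∀ i j, i ≠ j → M i j ≤ 0) {u : N → ℝ} (hu : ∀ i, 0 < u i)
    (hMu : ∀ i, 0 < (M *ᵥ u) i) {x : N → ℝ} (hx : ∀ i, 0 ≤ (M *ᵥ x) i) : ∀ i, 0 ≤ x i := by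
  by_contra hcon
  push_neg at hcon
  -- consider t = max over i of -x i / u i > 0
  have hne : (Finset.univ : Finset N).Nonempty := ⟨hcon.choose, Finset.mem_univ _⟩
  set t := Finset.univ.sup' hne (fun i => -x i / u i) with ht
  obtain ⟨k, _, hk⟩ := Finset.exists_mem_eq_sup' hne (fun i => -x i / u i)
  have htpos : 0 < t := by
    obtain ⟨i, hi⟩ := hcon
    have : -x i / u i ≤ t := Finset.le_sup' (fun i => -x i / u i) (Finset.mem_univ i)
    have hpos : 0 < -x i / u i := div_pos (by linarith) (hu i)
    linarith
  set y := fun i => x i + t * u i with hy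
  have hy0 : ∀ i, 0 ≤ y i := by
    intro i
    have : -x i / u i ≤ t := Finset.le_sup' (fun i => -x i / u i) (Finset.mem_univ i)
    have := (div_le_iff₀ (hu i)).mp this
    simp only [hy]; linarith
  have hyk : y k = 0 := by
    have : -x k / u k = t := hk.symm
    have := (div_eq_iff (ne_of_gt (hu k))).mp this
    simp only [hy]; linarith
  have h1 : (M *ᵥ y) k ≤ 0 := by
    have : (M *ᵥ y) k = ∑ j, M k j * y j := rfl
    rw [this, ← Finset.add_sum_erase _ _ (Finset.mem_univ k), hyk, mul_zero, zero_add]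
    exact Finset.sum_nonpos fun j hj =>
      mul_nonpos_of_nonpos_of_nonneg (hZ k j (Ne.symm (Finset.ne_of_mem_erase hj))) (hy0 j)
  have h2 : 0 < (M *ᵥ y) k := by
    have : (M *ᵥ y) k = (M *ᵥ x) k + t * (M *ᵥ u) k := by
      simp only [Matrix.mulVec, dotProduct, hy]
      have hj : ∀ j, M k j * (x j + t * u j) = M k j * x j + t * (M k j * u j) := fun j => by ring
      simp_rw [hj]
      rw [Finset.sum_add_distrib, Finset.mul_sum]
    rw [this]
    have := mul_pos htpos (hMu k)
    linarith [hx k]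
  linarith

lemma zmat_pos {N : Type*} [Fintype N] [DecidableEq N] {M : Matrix N N ℝ}
    (hZ : ∀ i j, i ≠ j → M i j ≤ 0) {x : N → ℝ} (hx : ∀ i, 0 ≤ x i)
    (hMx : ∀ i, 0 < (M *ᵥ x) i) : ∀ i, 0 < x i := by
  intro k
  rcases lt_or_eq_of_le (hx k) with h | h
  · exact h
  · exfalso
    have h1 : (M *ᵥ x) k ≤ 0 := by
      have : (M *ᵥ x) k = ∑ j, M k j * x j := rfl
      rw [this, ← Finset.add_sum_erase _ _ (Finset.mem_univ k), ← h, mul_zero, zero_add]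
      exact Finset.sum_nonpos fun j hj =>
        mul_nonpos_of_nonpos_of_nonneg (hZ k j (Ne.symm (Finset.ne_of_mem_erase hj))) (hx j)
    linarith [hMx k]

lemma sylv_split {a b : Type*} [Fintype a] [Fintype b] [DecidableEq a] [DecidableEq b]
    (E : Matrix a a ℝ) (F : Matrix b b ℝ) (X : Matrix a b ℝ) (i : a) (j : b) :
    (E * X) i j + (X * F) i j =
      (E i i + F j j) * X i j -
      ((∑ i', (if i' = i then 0 else -E i i') * X i' j) +
       ∑ j', X i j' * (if j' = j then 0 else -F j' j)) := by
  rw [Matrix.mul_apply, Matrix.mul_apply]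
  rw [← Finset.add_sum_erase _ (fun i' => E i i' * X i' j) (Finset.mem_univ i)]
  rw [← Finset.add_sum_erase _ (fun j' => X i j' * F j' j) (Finset.mem_univ j)]
  have e1 : (∑ i', (if i' = i then 0 else -E i i') * X i' j)
      = ∑ i' ∈ Finset.univ.erase i, -(E i i' * X i' j) := by
    rw [← Finset.sum_erase (a := i) (f := fun i' => (if i' = i then 0 else -E i i') * X i' j)
      Finset.univ (by simp)]
    refine Finset.sum_congr rfl fun i' hi' => ?_
    rw [if_neg (Finset.ne_of_mem_erase hi')]; ring
  have e2 : (∑ j', X i j' * (if j' = j then 0 else -F j' j))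
      = ∑ j' ∈ Finset.univ.erase j, -(X i j' * F j' j) := by
    rw [← Finset.sum_erase (a := j) (f := fun j' => X i j' * (if j' = j then 0 else -F j' j))
      Finset.univ (by simp)]
    refine Finset.sum_congr rfl fun j' hj' => ?_
    rw [if_neg (Finset.ne_of_mem_erase hj')]; ring
  rw [e1, e2, Finset.sum_neg_distrib, Finset.sum_neg_distrib]
  ring

/-- The fundamental comparison engine for Sylvester-type Z-operators. -/
lemma engine {a b : Type*} [Fintype a] [Fintype b] [DecidableEq a] [DecidableEq b]
    {E : Matrix a a ℝ} {F : Matrix b b ℝ}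
    {W : Matrix a b ℝ} (hW : ∀ i j, 0 < W i j)
    (hNe : ∀ i i', 0 ≤ (if i' = i then 0 else -E i i'))
    (hNf : ∀ j' j, 0 ≤ (if j' = j then 0 else -F j' j))
    (hEWF : ∀ i j, 0 < (E * W + W * F) i j)
    {R : Matrix a b ℝ}
    (hR : ∀ i j, (E i i + F j j) * R i j ≤
      (∑ i', (if i' = i then 0 else -E i i') * R i' j) +
      ∑ j', R i j' * (if j' = j then 0 else -F j' j)) :
    ∀ i j, R i j ≤ 0 := by
  cases isEmpty_or_nonempty a with
  | inl h => intro i; exact (IsEmpty.false i).elim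
  | inr ha =>
  cases isEmpty_or_nonempty b with
  | inl h => intro i j; exact (IsEmpty.false j).elim
  | inr hb =>
  have hsplit := fun (X : Matrix a b ℝ) i j => sylv_split E F X i j
  set dt := fun (i : a) (j : b) => E i i + F j j with hdtdef
  have hdt : ∀ i j, 0 < dt i j := by
    intro i j
    have h1 := hsplit W i j
    have h2 : 0 ≤ (∑ i', (if i' = i then 0 else -E i i') * W i' j) +
       ∑ j', W i j' * (if j' = j then 0 else -F j' j) :=
      add_nonneg (Finset.sum_nonneg fun i' _ => mul_nonneg (hNe i i') (hW i' j).le)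
        (Finset.sum_nonneg fun j' _ => mul_nonneg (hW i j').le (hNf j' j))
    have h3 := hEWF i j
    rw [Matrix.add_apply] at h3
    have h4 : 0 < dt i j * W i j := by rw [hdtdef]; dsimp only; linarith
    by_contra hc
    push_neg at hc
    nlinarith [hW i j]
  -- the contraction factor
  have hprodne : (Finset.univ : Finset (a × b)).Nonempty := Finset.univ_nonempty
  set θ₀ := Finset.univ.sup' hprodne
      (fun p : a × b => 1 - (E * W + W * F) p.1 p.2 / (dt p.1 p.2 * W p.1 p.2)) with hθ₀def
  set θ := max θ₀ 0 with hθdef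
  have hθ0 : 0 ≤ θ := le_max_right _ _
  have hθ1 : θ < 1 := by
    rw [hθdef]
    refine max_lt ?_ one_pos
    rw [hθ₀def, Finset.sup'_lt_iff]
    intro p _
    have hpos : 0 < (E * W + W * F) p.1 p.2 / (dt p.1 p.2 * W p.1 p.2) :=
      div_pos (hEWF p.1 p.2) (mul_pos (hdt p.1 p.2) (hW p.1 p.2))
    linarith
  have hθkey : ∀ i j, (∑ i', (if i' = i then 0 else -E i i') * W i' j) +
      (∑ j', W i j' * (if j' = j then 0 else -F j' j)) ≤ θ * (dt i j * W i j) := by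
    intro i j
    have h1 := hsplit W i j
    have h2 : 1 - (E * W + W * F) i j / (dt i j * W i j) ≤ θ := by
      refine le_trans ?_ (le_max_left _ _)
      exact Finset.le_sup' (f := fun p : a × b =>
        1 - (E * W + W * F) p.1 p.2 / (dt p.1 p.2 * W p.1 p.2)) (Finset.mem_univ (i, j))
    have hdw : 0 < dt i j * W i j := mul_pos (hdt i j) (hW i j)
    have h3 : (1 - (E * W + W * F) i j / (dt i j * W i j)) * (dt i j * W i j)
        = dt i j * W i j - (E * W + W * F) i j := by
      rw [sub_mul, div_mul_cancel₀ _ hdw.ne', one_mul]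
    have h4 := mul_le_mul_of_nonneg_right h2 hdw.le
    rw [h3] at h4
    have h5 : (E * W) i j + (W * F) i j = (E * W + W * F) i j := (Matrix.add_apply _ _ _ _).symm
    have hdd2 : dt i j * W i j = (E i i + F j j) * W i j := rfl
    linarith [h1, h4, h5, hdd2]
  -- initial bound
  obtain ⟨c₀, hc₀⟩ := (Set.finite_range fun p : a × b => R p.1 p.2 / W p.1 p.2).bddAbove
  set c := max c₀ 0 with hcdef
  have hc0 : 0 ≤ c := le_max_right _ _
  have hcR : ∀ i j, R i j ≤ c * W i j := by
    intro i j
    have h1 : R i j / W i j ≤ c₀ := hc₀ (Set.mem_range_self (i, j))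
    have h2 : R i j / W i j ≤ c := le_trans h1 (le_max_left c₀ 0)
    have := (div_le_iff₀ (hW i j)).mp h2
    linarith
  -- iterated bound
  have main : ∀ s : ℕ, ∀ i j, R i j ≤ c * θ ^ s * W i j := by
    intro s
    induction s with
    | zero => simpa using hcR
    | succ s ih =>
      intro i j
      have h1 := hR i j
      have h2 : (∑ i', (if i' = i then 0 else -E i i') * R i' j) ≤
          ∑ i', (if i' = i then 0 else -E i i') * (c * θ ^ s * W i' j) :=
        Finset.sum_le_sum fun i' _ => mul_le_mul_of_nonneg_left (ih i' j) (hNe i i')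
      have h3 : (∑ j', R i j' * (if j' = j then 0 else -F j' j)) ≤
          ∑ j', (c * θ ^ s * W i j') * (if j' = j then 0 else -F j' j) :=
        Finset.sum_le_sum fun j' _ => mul_le_mul_of_nonneg_right (ih i j') (hNf j' j)
      have h4 : (∑ i', (if i' = i then 0 else -E i i') * (c * θ ^ s * W i' j)) +
          (∑ j', (c * θ ^ s * W i j') * (if j' = j then 0 else -F j' j)) =
          (c * θ ^ s) * ((∑ i', (if i' = i then 0 else -E i i') * W i' j) +
            (∑ j', W i j' * (if j' = j then 0 else -F j' j))) := by
        rw [mul_add, Finset.mul_sum, Finset.mul_sum]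
        congr 1
        · exact Finset.sum_congr rfl fun i' _ => by ring
        · exact Finset.sum_congr rfl fun j' _ => by ring
      have h5 : 0 ≤ c * θ ^ s := mul_nonneg hc0 (pow_nonneg hθ0 s)
      have h6 := mul_le_mul_of_nonneg_left (hθkey i j) h5
      have h7 : dt i j * R i j ≤ dt i j * (c * θ ^ (s + 1) * W i j) := by
        have hdr : dt i j * R i j = (E i i + F j j) * R i j := by rw [hdtdef]
        have : c * θ ^ s * (θ * (dt i j * W i j)) = dt i j * (c * θ ^ (s + 1) * W i j) := by
          ring
        rw [hdr]
        linarith [h1, h2, h3, le_of_eq h4, h6, this ▸ h6]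
      exact le_of_mul_le_mul_left h7 (hdt i j)
  intro i j
  have hT : Tendsto (fun s : ℕ => c * θ ^ s * W i j) atTop (nhds 0) := by
    have h1 := (tendsto_pow_atTop_nhds_zero_of_lt_one hθ0 hθ1).const_mul c
    have h2 := h1.mul_const (W i j)
    simpa using h2
  exact ge_of_tendsto' hT fun s => main s i j

lemma zmat_coeff_nonneg {a : Type*} [DecidableEq a] {E : Matrix a a ℝ}
    (hE : ∀ i j, i ≠ j → E i j ≤ 0) :
    ∀ i i', 0 ≤ (if i' = i then 0 else -E i i') := by
  intro i i'
  by_cases h : i' = i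
  · simp [h]
  · rw [if_neg h]
    simp only [neg_nonneg]
    exact hE i i' fun hc => h hc.symm

/-- Inverse positivity for Sylvester Z-operators with a positive witness. -/
lemma sylv_nonneg {a b : Type*} [Fintype a] [Fintype b] [DecidableEq a] [DecidableEq b]
    {E : Matrix a a ℝ} {F : Matrix b b ℝ}
    (hE : ∀ i j, i ≠ j → E i j ≤ 0) (hF : ∀ i j, i ≠ j → F i j ≤ 0)
    {W : Matrix a b ℝ} (hW : ∀ i j, 0 < W i j)
    (hEWF : ∀ i j, 0 < (E * W + W * F) i j)
    {X : Matrix a b ℝ} (hX : ∀ i j, 0 ≤ (E * X + X * F) i j) :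
    ∀ i j, 0 ≤ X i j := by
  have hNf : ∀ j' j, 0 ≤ (if j' = j then 0 else -F j' j) := by
    intro j' j
    by_cases h : j' = j
    · simp [h]
    · rw [if_neg h]; simp only [neg_nonneg]; exact hF j' j h
  have key := engine (R := -X) hW (zmat_coeff_nonneg hE) hNf hEWF ?_
  · intro i j
    have := key i j
    simp only [Matrix.neg_apply] at this
    linarith
  · intro i j
    have h1 := sylv_split E F X i j
    have h2 := hX i j
    rw [Matrix.add_apply] at h2
    have e1 : (∑ i', (if i' = i then 0 else -E i i') * (-X) i' j)
        = -(∑ i', (if i' = i then 0 else -E i i') * X i' j) := by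
      rw [← Finset.sum_neg_distrib]
      exact Finset.sum_congr rfl fun i' _ => by rw [Matrix.neg_apply, mul_neg]
    have e2 : (∑ j', (-X) i j' * (if j' = j then 0 else -F j' j))
        = -(∑ j', X i j' * (if j' = j then 0 else -F j' j)) := by
      rw [← Finset.sum_neg_distrib]
      exact Finset.sum_congr rfl fun j' _ => by rw [Matrix.neg_apply, neg_mul]
    rw [e1, e2, Matrix.neg_apply]
    linarith

/-- The key entrywise-domination comparison lemma for complex vs real Sylvester equations. -/
lemma sylv_cabs {a b : Type*} [Fintype a] [Fintype b] [DecidableEq a] [DecidableEq b]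
    {Ec : Matrix a a ℂ} {Fc : Matrix b b ℂ} {Et : Matrix a a ℝ} {Ft : Matrix b b ℝ}
    (hdiag : ∀ i j, Et i i + Ft j j ≤ ‖Ec i i + Fc j j‖)
    (hoffE : ∀ i j, i ≠ j → Et i j ≤ -‖Ec i j‖)
    (hoffF : ∀ i j, i ≠ j → Ft i j ≤ -‖Fc i j‖)
    {W : Matrix a b ℝ} (hW : ∀ i j, 0 < W i j)
    (hEWF : ∀ i j, 0 < (Et * W + W * Ft) i j)
    {X : Matrix a b ℂ} {Xt : Matrix a b ℝ} {G : Matrix a b ℂ} {Gt : Matrix a b ℝ}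
    (hXeq : Ec * X + X * Fc = G) (hXteq : Et * Xt + Xt * Ft = Gt)
    (hG : ∀ i j, ‖G i j‖ ≤ Gt i j) :
    ∀ i j, ‖X i j‖ ≤ Xt i j := by
  have hE : ∀ i j, i ≠ j → Et i j ≤ 0 := fun i j h =>
    le_trans (hoffE i j h) (by simp [norm_nonneg])
  have hF : ∀ i j, i ≠ j → Ft i j ≤ 0 := fun i j h =>
    le_trans (hoffF i j h) (by simp [norm_nonneg])
  have hNf : ∀ j' j, 0 ≤ (if j' = j then 0 else -Ft j' j) := by
    intro j' j
    by_cases h : j' = j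
    · simp [h]
    · rw [if_neg h]; simp only [neg_nonneg]; exact hF j' j h
  set R : Matrix a b ℝ := Matrix.of fun i j => ‖X i j‖ - Xt i j with hRdef
  have key := engine (R := R) hW (zmat_coeff_nonneg hE) hNf hEWF ?_
  · intro i j
    have := key i j
    simp only [hRdef, Matrix.of_apply] at this
    linarith
  · intro i j
    -- complex splitting at the entry level
    have hsplitC : (Ec i i + Fc j j) * X i j =
        G i j - ((∑ i' ∈ Finset.univ.erase i, Ec i i' * X i' j) +
          ∑ j' ∈ Finset.univ.erase j, X i j' * Fc j' j) := by
      have h0 : (Ec * X) i j + (X * Fc) i j = G i j := by rw [← Matrix.add_apply, hXeq]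
      rw [Matrix.mul_apply, Matrix.mul_apply] at h0
      rw [← Finset.add_sum_erase _ (fun i' => Ec i i' * X i' j) (Finset.mem_univ i)] at h0
      rw [← Finset.add_sum_erase _ (fun j' => X i j' * Fc j' j) (Finset.mem_univ j)] at h0
      rw [← h0]; ring
    have habs : (Et i i + Ft j j) * ‖X i j‖ ≤
        Gt i j + ((∑ i' ∈ Finset.univ.erase i, ‖Ec i i'‖ * ‖X i' j‖) +
          ∑ j' ∈ Finset.univ.erase j, ‖X i j'‖ * ‖Fc j' j‖) := by
      have h1 : (Et i i + Ft j j) * ‖X i j‖ ≤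
          ‖(Ec i i + Fc j j) * X i j‖ := by
        rw [norm_mul]
        exact mul_le_mul_of_nonneg_right (hdiag i j) (norm_nonneg _)
      refine le_trans h1 ?_
      rw [hsplitC]
      refine le_trans (norm_sub_le _ _) ?_
      refine add_le_add (hG i j) ?_
      refine le_trans (norm_add_le _ _) (add_le_add ?_ ?_)
      · refine le_trans (norm_sum_le _ _) (Finset.sum_le_sum fun i' _ => ?_)
        rw [norm_mul]
      · refine le_trans (norm_sum_le _ _) (Finset.sum_le_sum fun j' _ => ?_)
        rw [norm_mul]
    -- real splitting
    have hsplitR : (Et i i + Ft j j) * Xt i j =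
        Gt i j + ((∑ i', (if i' = i then 0 else -Et i i') * Xt i' j) +
          ∑ j', Xt i j' * (if j' = j then 0 else -Ft j' j)) := by
      have h0 : (Et * Xt) i j + (Xt * Ft) i j = Gt i j := by rw [← Matrix.add_apply, hXteq]
      have h1 := sylv_split Et Ft Xt i j
      rw [h0] at h1
      linarith
    -- combine
    have hcoefE : ∀ i' ∈ Finset.univ.erase i,
        ‖Ec i i'‖ * ‖X i' j‖ ≤
        (if i' = i then 0 else -Et i i') * ‖X i' j‖ := by
      intro i' hi'
      have hne : i' ≠ i := Finset.ne_of_mem_erase hi'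
      rw [if_neg hne]
      refine mul_le_mul_of_nonneg_right ?_ (norm_nonneg _)
      have := hoffE i i' fun hc => hne hc.symm
      linarith
    have hcoefF : ∀ j' ∈ Finset.univ.erase j,
        ‖X i j'‖ * ‖Fc j' j‖ ≤
        ‖X i j'‖ * (if j' = j then 0 else -Ft j' j) := by
      intro j' hj'
      have hne : j' ≠ j := Finset.ne_of_mem_erase hj'
      rw [if_neg hne]
      refine mul_le_mul_of_nonneg_left ?_ (norm_nonneg _)
      have := hoffF j' j hne
      linarith
    have hErSum : (∑ i' ∈ Finset.univ.erase i, ‖Ec i i'‖ * ‖X i' j‖) ≤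
        ∑ i', (if i' = i then 0 else -Et i i') * ‖X i' j‖ := by
      refine le_trans (Finset.sum_le_sum hcoefE) (le_of_eq ?_)
      exact Finset.sum_erase (a := i) Finset.univ (by simp)
    have hFrSum : (∑ j' ∈ Finset.univ.erase j, ‖X i j'‖ * ‖Fc j' j‖) ≤
        ∑ j', ‖X i j'‖ * (if j' = j then 0 else -Ft j' j) := by
      refine le_trans (Finset.sum_le_sum hcoefF) (le_of_eq ?_)
      exact Finset.sum_erase (a := j) Finset.univ (by simp)
    have eA : (∑ i', (if i' = i then 0 else -Et i i') * R i' j) =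
        (∑ i', (if i' = i then 0 else -Et i i') * ‖X i' j‖) -
        ∑ i', (if i' = i then 0 else -Et i i') * Xt i' j := by
      rw [← Finset.sum_sub_distrib]
      refine Finset.sum_congr rfl fun i' _ => ?_
      simp only [hRdef, Matrix.of_apply]; ring
    have eB : (∑ j', R i j' * (if j' = j then 0 else -Ft j' j)) =
        (∑ j', ‖X i j'‖ * (if j' = j then 0 else -Ft j' j)) -
        ∑ j', Xt i j' * (if j' = j then 0 else -Ft j' j) := by
      rw [← Finset.sum_sub_distrib]
      refine Finset.sum_congr rfl fun j' _ => ?_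
      simp only [hRdef, Matrix.of_apply]; ring
    have hRij : R i j = ‖X i j‖ - Xt i j := rfl
    have hmulsub : (Et i i + Ft j j) * R i j =
        (Et i i + Ft j j) * ‖X i j‖ - (Et i i + Ft j j) * Xt i j := by
      rw [hRij]; ring
    rw [hmulsub, eA, eB]
    linarith

/-- A nonsingular M-matrix (in the witness sense) has a transposed witness as well. -/
lemma mmatrix_transpose_witness {N : Type*} [Fintype N] [DecidableEq N] {M : Matrix N N ℝ}
    (hZ : ∀ i j, i ≠ j → M i j ≤ 0) {u : N → ℝ} (hu : ∀ i, 0 < u i)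
    (hMu : ∀ i, 0 < (M *ᵥ u) i) :
    ∃ q : N → ℝ, (∀ i, 0 < q i) ∧ ∀ i, 0 < (Mᵀ *ᵥ q) i := by
  -- mulVec by M is injective, hence surjective
  have hinj : Function.Injective (Matrix.mulVecLin M) := by
    intro x y hxy
    have hsub : M *ᵥ (x - y) = 0 := by
      rw [Matrix.mulVec_sub]
      simp only [Matrix.mulVecLin_apply] at hxy
      rw [hxy, sub_self]
    have h1 : ∀ i, 0 ≤ (x - y) i :=
      zmat_mulVec_nonneg hZ hu hMu (by intro i; rw [hsub]; exact le_refl 0)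
    have hsub2 : M *ᵥ (y - x) = 0 := by
      rw [Matrix.mulVec_sub]
      simp only [Matrix.mulVecLin_apply] at hxy
      rw [hxy, sub_self]
    have h2 : ∀ i, 0 ≤ (y - x) i :=
      zmat_mulVec_nonneg hZ hu hMu (by intro i; rw [hsub2]; exact le_refl 0)
    funext i
    have := h1 i; have := h2 i
    simp only [Pi.sub_apply] at *
    linarith
  have hsurj : Function.Surjective (Matrix.mulVecLin M) :=
    (LinearMap.injective_iff_surjective).mp hinj
  -- columns of the inverse
  have hcol : ∀ k : N, ∃ v : N → ℝ, M *ᵥ v = Pi.single k 1 := by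
    intro k
    obtain ⟨v, hv⟩ := hsurj (Pi.single k 1)
    exact ⟨v, by simpa using hv⟩
  choose colv hcolv using hcol
  set B : Matrix N N ℝ := Matrix.of fun i k => colv k i with hBdef
  have hMB : M * B = 1 := by
    ext i k
    have : (M * B) i k = (M *ᵥ colv k) i := by
      rw [Matrix.mul_apply]; rfl
    rw [this, hcolv k, Matrix.one_apply, Pi.single_apply]
  have hBM : B * M = 1 := mul_eq_one_comm.mp hMB
  have hBpos : ∀ i k, 0 ≤ B i k := by
    intro i k
    have := zmat_mulVec_nonneg hZ hu hMu (x := colv k)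
      (by intro l; rw [hcolv k, Pi.single_apply]; split <;> norm_num)
    exact this i
  refine ⟨fun i => ∑ j, B j i, ?_, ?_⟩
  · intro i
    have hex : ∃ l, B l i > 0 := by
      by_contra hc
      push_neg at hc
      have hzero : ∀ l, B l i = 0 := fun l => le_antisymm (hc l) (hBpos l i)
      have h1 : (M * B) i i = 1 := by rw [hMB, Matrix.one_apply_eq]
      rw [Matrix.mul_apply] at h1
      simp only [hzero, mul_zero, Finset.sum_const_zero] at h1
      norm_num at h1
    obtain ⟨l, hl⟩ := hex
    exact Finset.sum_pos' (fun j _ => hBpos j i) ⟨l, Finset.mem_univ l, hl⟩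
  · intro i
    have : (Mᵀ *ᵥ fun i => ∑ j, B j i) i = ∑ j, (B * M) j i := by
      simp only [Matrix.mulVec, dotProduct, Matrix.transpose_apply, Matrix.mul_apply]
      rw [Finset.sum_comm]
      refine Finset.sum_congr rfl fun j _ => ?_
      rw [Finset.mul_sum]
      refine Finset.sum_congr rfl fun k _ => ?_
      ring
    rw [this]
    have h2 : ∑ j, (B * M) j i = 1 := by
      rw [hBM]
      simp [Matrix.one_apply]
    rw [h2]
    norm_num

section AlgebraIdentities

variable {α : Type*} [CommRing α] {p q : Type*} [Fintype p] [Fintype q]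

lemma riccati_rearrange (A : Matrix p p α) (B : Matrix p q α) (C : Matrix q p α)
    (D : Matrix q q α) (Z : Matrix p q α) (hZ : Z * C * Z - Z * D - A * Z + B = 0) :
    A * Z + Z * D = Z * C * Z + B := by
  have h : A * Z + Z * D - (Z * C * Z + B) = -(Z * C * Z - Z * D - A * Z + B) := by abel
  rw [hZ, neg_zero] at h
  exact sub_eq_zero.mp h

/-- Newton-step error identity against an exact solution. -/
lemma newton_sol {A : Matrix p p α} {B : Matrix p q α} {C : Matrix q p α}
    {D : Matrix q q α} {Z Xa Xb : Matrix p q α}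
    (hZ : Z * C * Z - Z * D - A * Z + B = 0)
    (hN : (A - Xa * C) * Xb + Xb * (D - C * Xa) = B - Xa * C * Xa) :
    (A - Xa * C) * (Z - Xb) + (Z - Xb) * (D - C * Xa) = (Z - Xa) * C * (Z - Xa) := by
  have h1 := riccati_rearrange A B C D Z hZ
  have hdiff : ((A - Xa * C) * (Z - Xb) + (Z - Xb) * (D - C * Xa)) -
      (Z - Xa) * C * (Z - Xa) =
      ((A * Z + Z * D) - (Z * C * Z + B)) -
      (((A - Xa * C) * Xb + Xb * (D - C * Xa)) - (B - Xa * C * Xa)) := by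
    simp only [Matrix.sub_mul, Matrix.mul_sub, Matrix.mul_assoc]
    abel
  rw [h1, sub_self, hN, sub_self, sub_zero] at hdiff
  exact sub_eq_zero.mp hdiff

/-- Newton increment identity between two consecutive steps. -/
lemma newton_newton {A : Matrix p p α} {B : Matrix p q α} {C : Matrix q p α}
    {D : Matrix q q α} {Xa Xb Xc : Matrix p q α}
    (hNa : (A - Xa * C) * Xb + Xb * (D - C * Xa) = B - Xa * C * Xa)
    (hNb : (A - Xb * C) * Xc + Xc * (D - C * Xb) = B - Xb * C * Xb) :
    (A - Xb * C) * (Xc - Xb) + (Xc - Xb) * (D - C * Xb) = (Xb - Xa) * C * (Xb - Xa) := by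
  have hdiff : ((A - Xb * C) * (Xc - Xb) + (Xc - Xb) * (D - C * Xb)) -
      (Xb - Xa) * C * (Xb - Xa) =
      (((A - Xb * C) * Xc + Xc * (D - C * Xb)) - (B - Xb * C * Xb)) -
      (((A - Xa * C) * Xb + Xb * (D - C * Xa)) - (B - Xa * C * Xa)) := by
    simp only [Matrix.sub_mul, Matrix.mul_sub, Matrix.mul_assoc]
    abel
  rw [hNa, sub_self, hNb, sub_self, sub_zero] at hdiff
  exact sub_eq_zero.mp hdiff

end AlgebraIdentities

/-- The Newton sequence for the complex NARE converges to the solution `Φ` with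
`|Φ| ≤ Φ̃`, with errors entrywise dominated by those of the Newton sequence for the dominating
real M-matrix NARE. -/

theorem stmt8 {m n : ℕ} (ω : ℝ) (hω : ω ∈ Set.Icc (0 : ℝ) 1)
    (A : Matrix (Fin m) (Fin m) ℂ) (B : Matrix (Fin m) (Fin n) ℂ)
    (C : Matrix (Fin n) (Fin m) ℂ) (D : Matrix (Fin n) (Fin n) ℂ)
    (At : Matrix (Fin m) (Fin m) ℝ) (Bt : Matrix (Fin m) (Fin n) ℝ)
    (Ct : Matrix (Fin n) (Fin m) ℝ) (Dt : Matrix (Fin n) (Fin n) ℝ)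
    (hQ : IsNonsingMMatrix (omegaComp ω (Matrix.fromBlocks D (-C) (-B) A)))
    (hQ1 : ∀ i, 0 < ((omegaComp ω (Matrix.fromBlocks D (-C) (-B) A)) *ᵥ 1) i)
    (hQt : IsNonsingMMatrix (Matrix.fromBlocks Dt (-Ct) (-Bt) At))
    (hQtle : ∀ i j, Matrix.fromBlocks Dt (-Ct) (-Bt) At i j ≤
      omegaComp ω (Matrix.fromBlocks D (-C) (-B) A) i j)
    (hQt1 : ∀ i, 0 < ((Matrix.fromBlocks Dt (-Ct) (-Bt) At) *ᵥ 1) i)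
    (Φt : Matrix (Fin m) (Fin n) ℝ)
    (hΦtPos : ∀ i j, 0 ≤ Φt i j)
    (hΦtSol : Φt * Ct * Φt - Φt * Dt - At * Φt + Bt = 0)
    (hΦtMin : ∀ Z : Matrix (Fin m) (Fin n) ℝ, (∀ i j, 0 ≤ Z i j) →
      Z * Ct * Z - Z * Dt - At * Z + Bt = 0 → ∀ i j, Φt i j ≤ Z i j)
    (Φ : Matrix (Fin m) (Fin n) ℂ)
    (hΦSol : Φ * C * Φ - Φ * D - A * Φ + B = 0)
    (hΦle : ∀ i j, ‖Φ i j‖ ≤ Φt i j)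
    (Φs : ℕ → Matrix (Fin m) (Fin n) ℂ) (hΦs0 : Φs 0 = 0)
    (hΦs : ∀ k, (A - Φs k * C) * Φs (k + 1) + Φs (k + 1) * (D - C * Φs k) =
      B - Φs k * C * Φs k)
    (Φts : ℕ → Matrix (Fin m) (Fin n) ℝ) (hΦts0 : Φts 0 = 0)
    (hΦts : ∀ k, (At - Φts k * Ct) * Φts (k + 1) + Φts (k + 1) * (Dt - Ct * Φts k) =
      Bt - Φts k * Ct * Φts k) :
    (∀ k i j, ‖(Φ - Φs k) i j‖ ≤ (Φt - Φts k) i j) ∧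
    ∀ i j, Tendsto (fun k => Φs k i j) atTop (nhds (Φ i j)) := by
  obtain ⟨hQtZ, w, hw, hQtw⟩ := hQt
  set Qt := Matrix.fromBlocks Dt (-Ct) (-Bt) At with hQtdef
  set p1 : Fin n → ℝ := w ∘ Sum.inl with hp1def
  set p2 : Fin m → ℝ := w ∘ Sum.inr with hp2def
  have hp1 : ∀ i, 0 < p1 i := fun i => hw _
  have hp2 : ∀ i, 0 < p2 i := fun i => hw _
  have hwelim : w = Sum.elim p1 p2 := by funext x; cases x <;> rfl
  have hblock : ∀ x, (Qt *ᵥ w) x =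
      Sum.elim (Dt *ᵥ p1 - Ct *ᵥ p2) (At *ᵥ p2 - Bt *ᵥ p1) x := by
    intro x
    rw [hwelim, hQtdef, Matrix.fromBlocks_mulVec]
    cases x with
    | inl i => simp [Matrix.neg_mulVec, sub_eq_add_neg]
    | inr i => simp [Matrix.neg_mulVec, sub_eq_add_neg]; ring
  have hDC : ∀ i, (Ct *ᵥ p2) i < (Dt *ᵥ p1) i := by
    intro i
    have := hQtw (Sum.inl i)
    rw [hblock (Sum.inl i)] at this
    simpa [sub_pos] using this
  have hAB : ∀ i, (Bt *ᵥ p1) i < (At *ᵥ p2) i := by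
    intro i
    have := hQtw (Sum.inr i)
    rw [hblock (Sum.inr i)] at this
    simpa [sub_pos] using this
  -- entrywise comparisons from hQtle
  have hCt : ∀ i j, ‖C i j‖ ≤ Ct i j := by
    intro i j
    have h := hQtle (Sum.inl i) (Sum.inr j)
    simp only [hQtdef, Matrix.fromBlocks_apply₁₂, omegaComp, Matrix.of_apply,
      Matrix.neg_apply, reduceCtorEq, if_false, norm_neg] at h
    linarith
  have hBt : ∀ i j, ‖B i j‖ ≤ Bt i j := by
    intro i j
    have h := hQtle (Sum.inr i) (Sum.inl j)
    simp only [hQtdef, Matrix.fromBlocks_apply₂₁, omegaComp, Matrix.of_apply,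
      Matrix.neg_apply, reduceCtorEq, if_false, norm_neg] at h
    linarith
  have hAtoff : ∀ i j, i ≠ j → At i j ≤ -‖A i j‖ := by
    intro i j hij
    have h := hQtle (Sum.inr i) (Sum.inr j)
    simp only [hQtdef, Matrix.fromBlocks_apply₂₂, omegaComp, Matrix.of_apply] at h
    rw [if_neg (by simp [hij])] at h
    simpa using h
  have hAtdiag : ∀ i, At i i ≤ wlin ω (A i i) := by
    intro i
    have h := hQtle (Sum.inr i) (Sum.inr i)
    simp only [hQtdef, Matrix.fromBlocks_apply₂₂, omegaComp, Matrix.of_apply,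
      if_pos, if_true] at h
    simpa using h
  have hDtoff : ∀ i j, i ≠ j → Dt i j ≤ -‖D i j‖ := by
    intro i j hij
    have h := hQtle (Sum.inl i) (Sum.inl j)
    simp only [hQtdef, Matrix.fromBlocks_apply₁₁, omegaComp, Matrix.of_apply] at h
    rw [if_neg (by simp [hij])] at h
    simpa using h
  have hDtdiag : ∀ i, Dt i i ≤ wlin ω (D i i) := by
    intro i
    have h := hQtle (Sum.inl i) (Sum.inl i)
    simp only [hQtdef, Matrix.fromBlocks_apply₁₁, omegaComp, Matrix.of_apply,
      if_pos, if_true] at h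
    simpa using h
  have hCt0 : ∀ i j, 0 ≤ Ct i j := fun i j => le_trans (norm_nonneg _) (hCt i j)
  have hBt0 : ∀ i j, 0 ≤ Bt i j := fun i j => le_trans (norm_nonneg _) (hBt i j)
  have hAtZ : ∀ i j, i ≠ j → At i j ≤ 0 := fun i j hij =>
    le_trans (hAtoff i j hij) (by simp [norm_nonneg])
  have hDtZ : ∀ i j, i ≠ j → Dt i j ≤ 0 := fun i j hij =>
    le_trans (hDtoff i j hij) (by simp [norm_nonneg])
  -- transposed witness
  obtain ⟨qv, hqv, hQtTq⟩ := mmatrix_transpose_witness hQtZ hw hQtw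
  set q1 : Fin n → ℝ := qv ∘ Sum.inl with hq1def
  set q2 : Fin m → ℝ := qv ∘ Sum.inr with hq2def
  have hq1 : ∀ i, 0 < q1 i := fun i => hqv _
  have hq2 : ∀ i, 0 < q2 i := fun i => hqv _
  have hqelim : qv = Sum.elim q1 q2 := by funext x; cases x <;> rfl
  have hqblock : ∀ x, (Qtᵀ *ᵥ qv) x =
      Sum.elim (Dtᵀ *ᵥ q1 - Btᵀ *ᵥ q2) (Atᵀ *ᵥ q2 - Ctᵀ *ᵥ q1) x := by
    intro x
    rw [hqelim, hQtdef, Matrix.fromBlocks_transpose, Matrix.fromBlocks_mulVec]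
    cases x with
    | inl i => simp [Matrix.transpose_neg, Matrix.neg_mulVec, sub_eq_add_neg]
    | inr i => simp [Matrix.transpose_neg, Matrix.neg_mulVec, sub_eq_add_neg]; ring
  have hqDB : ∀ i, (Btᵀ *ᵥ q2) i < (Dtᵀ *ᵥ q1) i := by
    intro i
    have := hQtTq (Sum.inl i)
    rw [hqblock (Sum.inl i)] at this
    simpa [sub_pos] using this
  have hqAC : ∀ i, (Ctᵀ *ᵥ q1) i < (Atᵀ *ᵥ q2) i := by
    intro i
    have := hQtTq (Sum.inr i)
    rw [hqblock (Sum.inr i)] at this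
    simpa [sub_pos] using this
  -- the basic Sylvester operator X ↦ At * X + X * Dt
  set L0 : Matrix (Fin m) (Fin n) ℝ →ₗ[ℝ] Matrix (Fin m) (Fin n) ℝ :=
    { toFun := fun X => At * X + X * Dt
      map_add' := by
        intro X Y
        simp only [Matrix.mul_add, Matrix.add_mul]
        abel
      map_smul' := by
        intro c X
        simp only [Matrix.mul_smul, Matrix.smul_mul, RingHom.id_apply, smul_add] } with hL0def
  have hL0app : ∀ X, L0 X = At * X + X * Dt := fun X => rfl
  -- witness matrix for the pair (At, Dt)
  set W0 : Matrix (Fin m) (Fin n) ℝ := Matrix.of fun i j => p2 i * q1 j with hW0def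
  have hW0pos : ∀ i j, 0 < W0 i j := fun i j => mul_pos (hp2 i) (hq1 j)
  have hAtp2 : ∀ i, 0 < (At *ᵥ p2) i := by
    intro i
    have h1 : 0 ≤ (Bt *ᵥ p1) i := mulVec_nonneg_ent hBt0 (fun j => (hp1 j).le) i
    linarith [hAB i]
  have hDtTq1 : ∀ j, 0 < (Dtᵀ *ᵥ q1) j := by
    intro j
    have h1 : 0 ≤ (Btᵀ *ᵥ q2) j :=
      mulVec_nonneg_ent (fun a b => hBt0 b a) (fun a => (hq2 a).le) j
    linarith [hqDB j]
  have hEWF0 : ∀ i j, 0 < (At * W0 + W0 * Dt) i j := by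
    intro i j
    have e1 : (At * W0) i j = (At *ᵥ p2) i * q1 j := by
      rw [Matrix.mul_apply]
      simp only [hW0def, Matrix.of_apply, Matrix.mulVec, dotProduct]
      rw [Finset.sum_mul]
      exact Finset.sum_congr rfl fun k _ => by ring
    have e2 : (W0 * Dt) i j = p2 i * (Dtᵀ *ᵥ q1) j := by
      rw [Matrix.mul_apply]
      simp only [hW0def, Matrix.of_apply, Matrix.mulVec, dotProduct, Matrix.transpose_apply]
      rw [Finset.mul_sum]
      exact Finset.sum_congr rfl fun k _ => by ring
    rw [Matrix.add_apply, e1, e2]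
    have := mul_pos (hAtp2 i) (hq1 j)
    have := mul_pos (hp2 i) (hDtTq1 j)
    linarith
  have hL0inj : Function.Injective L0 := by
    rw [← LinearMap.ker_eq_bot]
    rw [LinearMap.ker_eq_bot']
    intro X hX
    have h1 : ∀ i j, 0 ≤ (At * X + X * Dt) i j := by
      intro i j
      rw [hL0app] at hX
      rw [hX]
      exact le_refl 0
    have h2 : ∀ i j, 0 ≤ (At * (-X) + (-X) * Dt) i j := by
      intro i j
      have : At * (-X) + (-X) * Dt = -(At * X + X * Dt) := by
        rw [Matrix.mul_neg, Matrix.neg_mul]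
        abel
      rw [this, hL0app] at *
      rw [hX]
      simp
    have h3 := sylv_nonneg hAtZ hDtZ hW0pos hEWF0 h1
    have h4 := sylv_nonneg hAtZ hDtZ hW0pos hEWF0 h2
    ext i j
    have := h4 i j
    simp only [Matrix.neg_apply] at this
    have := h3 i j
    simp only [Matrix.zero_apply]
    linarith
  have hL0surj : Function.Surjective L0 := LinearMap.injective_iff_surjective.mp hL0inj
  set eL : Matrix (Fin m) (Fin n) ℝ ≃ₗ[ℝ] Matrix (Fin m) (Fin n) ℝ :=
    LinearEquiv.ofBijective L0 ⟨hL0inj, hL0surj⟩ with heLdef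
  set Xs : ℕ → Matrix (Fin m) (Fin n) ℝ :=
    fun k => Nat.rec 0 (fun _ Xk => eL.symm (Bt + Xk * Ct * Xk)) k with hXsdef
  have hXs0 : Xs 0 = 0 := rfl
  have hXseq : ∀ k, At * Xs (k + 1) + Xs (k + 1) * Dt = Bt + Xs k * Ct * Xs k := by
    intro k
    have h1 : Xs (k + 1) = eL.symm (Bt + Xs k * Ct * Xs k) := rfl
    have h2 := eL.apply_symm_apply (Bt + Xs k * Ct * Xs k)
    rw [h1]
    exact h2
  have SNN : ∀ (Y : Matrix (Fin m) (Fin n) ℝ),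
      (∀ i j, 0 ≤ (At * Y + Y * Dt) i j) → ∀ i j, 0 ≤ Y i j :=
    fun Y h => sylv_nonneg hAtZ hDtZ hW0pos hEWF0 h
  have auxP : ∀ k, (∀ i j, 0 ≤ Xs k i j) ∧ (∀ i j, Xs k i j ≤ Xs (k + 1) i j) ∧
      (∀ i j, Xs k i j ≤ Φt i j) ∧ (∀ i, (Xs k *ᵥ p1) i ≤ p2 i) ∧
      (∀ j, ((Xs k)ᵀ *ᵥ q2) j ≤ q1 j) := by
    intro k
    induction k with
    | zero =>
      have hz : ∀ i j, (0 : Matrix (Fin m) (Fin n) ℝ) i j = 0 := fun i j => rfl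
      have hXs1 : ∀ i j, 0 ≤ Xs (0+1) i j := by
        apply SNN
        intro i j
        have e0 := hXseq 0
        rw [hXs0] at e0
        simp only [Matrix.zero_mul, Matrix.mul_zero, add_zero] at e0
        rw [e0]
        exact hBt0 i j
      refine ⟨?_, ?_, ?_, ?_, ?_⟩
      · intro i j; rw [hXs0]; exact le_refl 0
      · intro i j; rw [hXs0]; exact hXs1 i j
      · intro i j; rw [hXs0]; exact hΦtPos i j
      · intro i; rw [hXs0, Matrix.zero_mulVec]; exact (hp2 i).le
      · intro j; rw [hXs0, Matrix.transpose_zero, Matrix.zero_mulVec]; exact (hq1 j).le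
    | succ k ih =>
      obtain ⟨ha, hmono, hbd, hp, hq⟩ := ih
      have haS : ∀ i j, 0 ≤ Xs (k + 1) i j := fun i j => le_trans (ha i j) (hmono i j)
      have hprod_mono : ∀ i j, (Xs k * Ct * Xs k) i j ≤ (Xs (k+1) * Ct * Xs (k+1)) i j :=
        mul_le_mul_ent (mul_nonneg_ent ha hCt0) ha
          (mul_le_mul_ent ha hCt0 hmono (fun _ _ => le_refl _)) hmono
      have hmono' : ∀ i j, Xs (k+1) i j ≤ Xs (k+1+1) i j := by
        have hd : ∀ i j, 0 ≤ (Xs (k+1+1) - Xs (k+1)) i j := by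
          apply SNN
          intro i j
          have e : At * (Xs (k+1+1) - Xs (k+1)) + (Xs (k+1+1) - Xs (k+1)) * Dt =
              (At * Xs (k+1+1) + Xs (k+1+1) * Dt) - (At * Xs (k+1) + Xs (k+1) * Dt) := by
            rw [Matrix.mul_sub, Matrix.sub_mul]; abel
          rw [hXseq (k+1), hXseq k] at e
          have e2 : At * (Xs (k+1+1) - Xs (k+1)) + (Xs (k+1+1) - Xs (k+1)) * Dt =
              Xs (k+1) * Ct * Xs (k+1) - Xs k * Ct * Xs k := by rw [e]; abel
          rw [e2, Matrix.sub_apply]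
          have := hprod_mono i j
          linarith
        intro i j
        have := hd i j
        rw [Matrix.sub_apply] at this
        linarith
      have hbd' : ∀ i j, Xs (k+1) i j ≤ Φt i j := by
        have h1 : ∀ i j, 0 ≤ (Φt - Xs (k+1)) i j := by
          apply SNN
          intro i j
          have e : At * (Φt - Xs (k+1)) + (Φt - Xs (k+1)) * Dt =
              (At * Φt + Φt * Dt) - (At * Xs (k+1) + Xs (k+1) * Dt) := by
            rw [Matrix.mul_sub, Matrix.sub_mul]; abel
          rw [hXseq k, riccati_rearrange At Bt Ct Dt Φt hΦtSol] at e
          have e2 : At * (Φt - Xs (k+1)) + (Φt - Xs (k+1)) * Dt =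
              Φt * Ct * Φt - Xs k * Ct * Xs k := by rw [e]; abel
          rw [e2, Matrix.sub_apply]
          have := mul_le_mul_ent (mul_nonneg_ent ha hCt0) ha
            (mul_le_mul_ent ha hCt0 hbd (fun _ _ => le_refl _)) hbd i j
          linarith
        intro i j
        have := h1 i j
        rw [Matrix.sub_apply] at this
        linarith
      have hmono_SNN := hmono'
      -- vector bound (iv)
      have hp' : ∀ i, (Xs (k+1) *ᵥ p1) i ≤ p2 i := by
        have h0 := congrArg (fun M => M *ᵥ p1) (hXseq k)
        simp only [Matrix.add_mulVec, ← Matrix.mulVec_mulVec] at h0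
        have hXkp1 : ∀ i, 0 ≤ (Xs k *ᵥ p1) i := mulVec_nonneg_ent ha (fun j => (hp1 j).le)
        have hCtv0 : ∀ i, 0 ≤ (Ct *ᵥ (Xs k *ᵥ p1)) i := mulVec_nonneg_ent hCt0 hXkp1
        have hCtp2' : ∀ i, 0 ≤ (Ct *ᵥ p2) i := mulVec_nonneg_ent hCt0 (fun j => (hp2 j).le)
        have t1 : ∀ i, (Xs k *ᵥ (Ct *ᵥ (Xs k *ᵥ p1))) i ≤ (Xs k *ᵥ (Ct *ᵥ p2)) i :=
          mulVec_le_mulVec ha hCtv0 (fun _ _ => le_refl _)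
            (mulVec_le_mulVec hCt0 hXkp1 (fun _ _ => le_refl _) hp)
        have t2 : ∀ i, (Xs k *ᵥ (Ct *ᵥ p2)) i ≤ (Xs (k+1) *ᵥ (Ct *ᵥ p2)) i :=
          mulVec_le_mulVec ha hCtp2' hmono (fun _ => le_refl _)
        have t3 : ∀ i, (Xs (k+1) *ᵥ (Ct *ᵥ p2)) i ≤ (Xs (k+1) *ᵥ (Dt *ᵥ p1)) i :=
          mulVec_le_mulVec haS hCtp2' (fun _ _ => le_refl _) (fun i => (hDC i).le)
        have hAty : ∀ i, (At *ᵥ (Xs (k+1) *ᵥ p1)) i ≤ (Bt *ᵥ p1) i := by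
          intro i
          have e := congrFun h0 i
          simp only [Pi.add_apply] at e
          have := t1 i
          have := t2 i
          have := t3 i
          linarith
        have hfin : ∀ i, 0 ≤ (At *ᵥ (p2 - Xs (k+1) *ᵥ p1)) i := by
          intro i
          rw [Matrix.mulVec_sub]
          have := hAty i
          have := hAB i
          simp only [Pi.sub_apply]
          linarith
        have := zmat_mulVec_nonneg hAtZ hp2 hAtp2 hfin
        intro i
        have h2 := this i
        simp only [Pi.sub_apply] at h2
        linarith
      -- vector bound (v)
      have hq' : ∀ j, ((Xs (k+1))ᵀ *ᵥ q2) j ≤ q1 j := by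
        have h0 := congrArg Matrix.transpose (hXseq k)
        simp only [Matrix.transpose_add, Matrix.transpose_mul] at h0
        have h1 := congrArg (fun M => M *ᵥ q2) h0
        simp only [Matrix.add_mulVec, ← Matrix.mulVec_mulVec] at h1
        have hCtT0 : ∀ i j, 0 ≤ Ctᵀ i j := fun i j => hCt0 j i
        have hXkq2 : ∀ j, 0 ≤ ((Xs k)ᵀ *ᵥ q2) j :=
          mulVec_nonneg_ent (fun i j => ha j i) (fun i => (hq2 i).le)
        have hCtv0 : ∀ j, 0 ≤ (Ctᵀ *ᵥ ((Xs k)ᵀ *ᵥ q2)) j := mulVec_nonneg_ent hCtT0 hXkq2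
        have hCtq1' : ∀ j, 0 ≤ (Ctᵀ *ᵥ q1) j := mulVec_nonneg_ent hCtT0 (fun i => (hq1 i).le)
        have t1 : ∀ j, ((Xs k)ᵀ *ᵥ (Ctᵀ *ᵥ ((Xs k)ᵀ *ᵥ q2))) j ≤ ((Xs k)ᵀ *ᵥ (Ctᵀ *ᵥ q1)) j :=
          mulVec_le_mulVec (fun i j => ha j i) hCtv0 (fun _ _ => le_refl _)
            (mulVec_le_mulVec hCtT0 hXkq2 (fun _ _ => le_refl _) hq)
        have t2 : ∀ j, ((Xs k)ᵀ *ᵥ (Ctᵀ *ᵥ q1)) j ≤ ((Xs (k+1))ᵀ *ᵥ (Ctᵀ *ᵥ q1)) j :=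
          mulVec_le_mulVec (fun i j => ha j i) hCtq1' (fun i j => hmono j i) (fun _ => le_refl _)
        have t3 : ∀ j, ((Xs (k+1))ᵀ *ᵥ (Ctᵀ *ᵥ q1)) j ≤ ((Xs (k+1))ᵀ *ᵥ (Atᵀ *ᵥ q2)) j :=
          mulVec_le_mulVec (fun i j => haS j i) hCtq1' (fun _ _ => le_refl _)
            (fun i => (hqAC i).le)
        have hDty : ∀ j, (Dtᵀ *ᵥ ((Xs (k+1))ᵀ *ᵥ q2)) j ≤ (Btᵀ *ᵥ q2) j := by
          intro j
          have e := congrFun h1 j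
          simp only [Pi.add_apply] at e
          have := t1 j
          have := t2 j
          have := t3 j
          linarith
        have hDtTZ : ∀ i j, i ≠ j → Dtᵀ i j ≤ 0 := fun i j hij => hDtZ j i (Ne.symm hij)
        have hfin : ∀ j, 0 ≤ (Dtᵀ *ᵥ (q1 - (Xs (k+1))ᵀ *ᵥ q2)) j := by
          intro j
          rw [Matrix.mulVec_sub]
          have := hDty j
          have := hqDB j
          simp only [Pi.sub_apply]
          linarith
        have := zmat_mulVec_nonneg hDtTZ hq1 hDtTq1 hfin
        intro j
        have h2 := this j
        simp only [Pi.sub_apply] at h2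
        linarith
      exact ⟨haS, hmono', hbd', hp', hq'⟩
  -- limit of the auxiliary iteration
  have hXmono : ∀ i j, Monotone fun k => Xs k i j := fun i j =>
    monotone_nat_of_le_succ fun k => (auxP k).2.1 i j
  have hXbdd : ∀ i j, BddAbove (Set.range fun k => Xs k i j) := by
    intro i j
    refine ⟨Φt i j, ?_⟩
    rintro x ⟨k, rfl⟩
    exact (auxP k).2.2.1 i j
  set LX : Matrix (Fin m) (Fin n) ℝ := Matrix.of fun i j => ⨆ k, Xs k i j with hLXdef
  have hLXT : ∀ i j, Tendsto (fun k => Xs k i j) atTop (nhds (LX i j)) := fun i j =>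
    tendsto_atTop_ciSup (hXmono i j) (hXbdd i j)
  have KEY : ∀ (Y : ℕ → Matrix (Fin m) (Fin n) ℝ) (LY : Matrix (Fin m) (Fin n) ℝ)
      (G : Matrix (Fin m) (Fin n) ℝ × Matrix (Fin m) (Fin n) ℝ → Matrix (Fin m) (Fin n) ℝ),
      Continuous G → (∀ i j, Tendsto (fun k => Y k i j) atTop (nhds (LY i j))) →
      (∀ k, G (Y k, Y (k + 1)) = 0) → G (LY, LY) = 0 := by
    intro Y LY G hG hT h0
    have hTY : Tendsto Y atTop (nhds LY) := by
      refine tendsto_pi_nhds.mpr ?_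
      intro i
      rw [tendsto_pi_nhds]
      intro j
      exact hT i j
    have hTY1 : Tendsto (fun k => Y (k + 1)) atTop (nhds LY) :=
      hTY.comp (tendsto_add_atTop_nat 1)
    have hpair : Tendsto (fun k => (Y k, Y (k + 1))) atTop (nhds (LY, LY)) :=
      hTY.prodMk_nhds hTY1
    have hcomp : Tendsto (fun k => G (Y k, Y (k + 1))) atTop (nhds (G (LY, LY))) :=
      (hG.tendsto _).comp hpair
    have hconst : Tendsto (fun _ : ℕ => (0 : Matrix (Fin m) (Fin n) ℝ)) atTop
        (nhds (G (LY, LY))) := by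
      have : (fun k => G (Y k, Y (k + 1))) = fun _ : ℕ => (0 : Matrix (Fin m) (Fin n) ℝ) := by
        funext k; exact h0 k
      rwa [this] at hcomp
    exact (tendsto_nhds_unique hconst tendsto_const_nhds)
  have hG0cont : Continuous (fun p : Matrix (Fin m) (Fin n) ℝ × Matrix (Fin m) (Fin n) ℝ =>
      At * p.2 + p.2 * Dt - (Bt + p.1 * Ct * p.1)) := by
    refine Continuous.sub (Continuous.add ?_ ?_) (Continuous.add continuous_const ?_)
    · exact continuous_const.matrix_mul continuous_snd
    · exact continuous_snd.matrix_mul continuous_const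
    · exact (continuous_fst.matrix_mul continuous_const).matrix_mul continuous_fst
  have hLXeq0 := KEY Xs LX _ hG0cont hLXT (fun k => by
    rw [sub_eq_zero]
    exact hXseq k)
  have hLXeq : At * LX + LX * Dt = Bt + LX * Ct * LX := sub_eq_zero.mp hLXeq0
  have hLXsol : LX * Ct * LX - LX * Dt - At * LX + Bt = 0 := by
    have h : LX * Ct * LX - LX * Dt - At * LX + Bt =
        -(At * LX + LX * Dt - (Bt + LX * Ct * LX)) := by abel
    rw [h, sub_eq_zero.mpr hLXeq, neg_zero]
  have hLX0 : ∀ i j, 0 ≤ LX i j := by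
    intro i j
    have h1 := le_ciSup (hXbdd i j) 0
    rw [hXs0] at h1
    exact le_trans (le_refl 0) h1
  have hΦtLX : ∀ i j, Φt i j ≤ LX i j := hΦtMin LX hLX0 hLXsol
  have hLXp1 : ∀ i, (LX *ᵥ p1) i ≤ p2 i := by
    intro i
    have hTd : Tendsto (fun k => (Xs k *ᵥ p1) i) atTop (nhds ((LX *ᵥ p1) i)) := by
      have : ∀ k, (Xs k *ᵥ p1) i = ∑ j, Xs k i j * p1 j := fun k => rfl
      simp only [this]
      have : (LX *ᵥ p1) i = ∑ j, LX i j * p1 j := rfl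
      rw [this]
      exact tendsto_finset_sum _ fun j _ => (hLXT i j).mul_const (p1 j)
    exact le_of_tendsto hTd (Filter.Eventually.of_forall fun k => (auxP k).2.2.2.1 i)
  have hLXq2 : ∀ j, (LXᵀ *ᵥ q2) j ≤ q1 j := by
    intro j
    have hTd : Tendsto (fun k => ((Xs k)ᵀ *ᵥ q2) j) atTop (nhds ((LXᵀ *ᵥ q2) j)) := by
      have h1 : ∀ k, ((Xs k)ᵀ *ᵥ q2) j = ∑ i, Xs k i j * q2 i := by
        intro k
        simp only [Matrix.mulVec, dotProduct, Matrix.transpose_apply]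
      have h2 : (LXᵀ *ᵥ q2) j = ∑ i, LX i j * q2 i := by
        simp only [Matrix.mulVec, dotProduct, Matrix.transpose_apply]
      simp only [h1, h2]
      exact tendsto_finset_sum _ fun i _ => (hLXT i j).mul_const (q2 i)
    exact le_of_tendsto hTd (Filter.Eventually.of_forall fun k => (auxP k).2.2.2.2 j)
  have hΦtp1 : ∀ i, (Φt *ᵥ p1) i ≤ p2 i := fun i =>
    le_trans (mulVec_le_mulVec hΦtPos (fun j => (hp1 j).le) hΦtLX (fun _ => le_refl _) i)
      (hLXp1 i)
  have hΦtq2 : ∀ j, (Φtᵀ *ᵥ q2) j ≤ q1 j := fun j =>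
    le_trans (mulVec_le_mulVec (fun a b => hΦtPos b a) (fun i => (hq2 i).le)
      (fun a b => hΦtLX b a) (fun _ => le_refl _) j) (hLXq2 j)
  -- the witness vectors u and v
  have hAtΦt : At * Φt = Φt * Ct * Φt + Bt - Φt * Dt := by
    have h := riccati_rearrange At Bt Ct Dt Φt hΦtSol
    have h2 : At * Φt + Φt * Dt - Φt * Dt = Φt * Ct * Φt + Bt - Φt * Dt := by rw [h]
    rw [← h2]; abel
  have hΦtDt : Φt * Dt = Φt * Ct * Φt + Bt - At * Φt := by
    have h := riccati_rearrange At Bt Ct Dt Φt hΦtSol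
    have h2 : At * Φt + Φt * Dt - At * Φt = Φt * Ct * Φt + Bt - At * Φt := by rw [h]
    rw [← h2]; abel
  set u : Fin m → ℝ := p2 - Φt *ᵥ p1 with hudef
  set v : Fin n → ℝ := q1 - Φtᵀ *ᵥ q2 with hvdef
  have hu0 : ∀ i, 0 ≤ u i := by
    intro i
    simp only [hudef, Pi.sub_apply]
    linarith [hΦtp1 i]
  have hv0 : ∀ j, 0 ≤ v j := by
    intro j
    simp only [hvdef, Pi.sub_apply]
    linarith [hΦtq2 j]
  have hEu : (At - Φt * Ct) *ᵥ u = (At *ᵥ p2 - Bt *ᵥ p1) + Φt *ᵥ (Dt *ᵥ p1 - Ct *ᵥ p2) := by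
    rw [hudef]
    simp only [Matrix.sub_mulVec, Matrix.mulVec_sub, Matrix.mulVec_mulVec, Matrix.sub_mul]
    rw [hAtΦt]
    simp only [Matrix.sub_mulVec, Matrix.add_mulVec, Matrix.mulVec_sub, Matrix.mulVec_mulVec]
    abel
  have hEupos : ∀ i, 0 < ((At - Φt * Ct) *ᵥ u) i := by
    intro i
    rw [hEu]
    have h1 : 0 ≤ (Φt *ᵥ (Dt *ᵥ p1 - Ct *ᵥ p2)) i :=
      mulVec_nonneg_ent hΦtPos (fun j => by simp only [Pi.sub_apply]; linarith [hDC j]) i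
    have h2 := hAB i
    simp only [Pi.add_apply, Pi.sub_apply]
    linarith
  have hEZ : ∀ i j, i ≠ j → (At - Φt * Ct) i j ≤ 0 := by
    intro i j hij
    rw [Matrix.sub_apply]
    have := mul_nonneg_ent hΦtPos hCt0 i j
    linarith [hAtZ i j hij]
  have hupos : ∀ i, 0 < u i := zmat_pos hEZ hu0 hEupos
  -- transposed
  have hDtTΦtT : Dtᵀ * Φtᵀ = Φtᵀ * Ctᵀ * Φtᵀ + Btᵀ - Φtᵀ * Atᵀ := by
    have h := congrArg Matrix.transpose hΦtDt
    simp only [Matrix.transpose_mul, Matrix.transpose_sub, Matrix.transpose_add] at h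
    rw [h, Matrix.mul_assoc]
  have hFv : (Dtᵀ - Φtᵀ * Ctᵀ) *ᵥ v =
      (Dtᵀ *ᵥ q1 - Btᵀ *ᵥ q2) + Φtᵀ *ᵥ (Atᵀ *ᵥ q2 - Ctᵀ *ᵥ q1) := by
    rw [hvdef]
    simp only [Matrix.sub_mulVec, Matrix.mulVec_sub, Matrix.mulVec_mulVec, Matrix.sub_mul]
    rw [hDtTΦtT]
    simp only [Matrix.sub_mulVec, Matrix.add_mulVec, Matrix.mulVec_sub, Matrix.mulVec_mulVec]
    abel
  have hFvpos : ∀ j, 0 < ((Dtᵀ - Φtᵀ * Ctᵀ) *ᵥ v) j := by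
    intro j
    rw [hFv]
    have h1 : 0 ≤ (Φtᵀ *ᵥ (Atᵀ *ᵥ q2 - Ctᵀ *ᵥ q1)) j :=
      mulVec_nonneg_ent (fun a b => hΦtPos b a)
        (fun i => by simp only [Pi.sub_apply]; linarith [hqAC i]) j
    have h2 := hqDB j
    simp only [Pi.add_apply, Pi.sub_apply]
    linarith
  have hFZ : ∀ i j, i ≠ j → (Dtᵀ - Φtᵀ * Ctᵀ) i j ≤ 0 := by
    intro i j hij
    rw [Matrix.sub_apply]
    have h1 : 0 ≤ (Φtᵀ * Ctᵀ) i j :=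
      mul_nonneg_ent (fun a b => hΦtPos b a) (fun a b => hCt0 b a) i j
    have h2 : Dtᵀ i j ≤ 0 := hDtZ j i (Ne.symm hij)
    linarith
  have hvpos : ∀ j, 0 < v j := zmat_pos hFZ hv0 hFvpos
  -- the witness matrix
  set W : Matrix (Fin m) (Fin n) ℝ := Matrix.of fun i j => u i * v j with hWdef
  have hWpos : ∀ i j, 0 < W i j := fun i j => mul_pos (hupos i) (hvpos j)
  have rank1L : ∀ (M : Matrix (Fin m) (Fin m) ℝ) i j, (M * W) i j = (M *ᵥ u) i * v j := by
    intro M i j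
    rw [Matrix.mul_apply]
    simp only [hWdef, Matrix.of_apply, Matrix.mulVec, dotProduct]
    rw [Finset.sum_mul]
    exact Finset.sum_congr rfl fun k _ => by ring
  have rank1R : ∀ (N : Matrix (Fin n) (Fin n) ℝ) i j, (W * N) i j = u i * (Nᵀ *ᵥ v) j := by
    intro N i j
    rw [Matrix.mul_apply]
    simp only [hWdef, Matrix.of_apply, Matrix.mulVec, dotProduct, Matrix.transpose_apply]
    rw [Finset.mul_sum]
    exact Finset.sum_congr rfl fun k _ => by ring
  have hWit : ∀ (Pt : Matrix (Fin m) (Fin n) ℝ), (∀ i j, 0 ≤ Pt i j) →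
      (∀ i j, Pt i j ≤ Φt i j) →
      ∀ i j, 0 < ((At - Pt * Ct) * W + W * (Dt - Ct * Pt)) i j := by
    intro Pt hPt0 hPtΦ i j
    have hCtu0 : ∀ i, 0 ≤ (Ct *ᵥ u) i := mulVec_nonneg_ent hCt0 hu0
    have hCtv0 : ∀ j, 0 ≤ (Ctᵀ *ᵥ v) j := mulVec_nonneg_ent (fun a b => hCt0 b a) hv0
    have hEP : ∀ i, ((At - Φt * Ct) *ᵥ u) i ≤ ((At - Pt * Ct) *ᵥ u) i := by
      intro i
      rw [Matrix.sub_mulVec, Matrix.sub_mulVec, ← Matrix.mulVec_mulVec,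
        ← Matrix.mulVec_mulVec]
      have := mulVec_le_mulVec hPt0 hCtu0 hPtΦ (fun _ => le_refl _) i
      simp only [Pi.sub_apply]
      linarith
    have hFP : ∀ j, ((Dtᵀ - Φtᵀ * Ctᵀ) *ᵥ v) j ≤ ((Dt - Ct * Pt)ᵀ *ᵥ v) j := by
      intro j
      rw [Matrix.transpose_sub, Matrix.transpose_mul, Matrix.sub_mulVec, Matrix.sub_mulVec,
        ← Matrix.mulVec_mulVec, ← Matrix.mulVec_mulVec]
      have := mulVec_le_mulVec (X := Ptᵀ) (X' := Φtᵀ) (fun a b => hPt0 b a) hCtv0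
        (fun a b => hPtΦ b a) (fun _ => le_refl _) j
      simp only [Pi.sub_apply]
      linarith
    rw [Matrix.add_apply, rank1L, rank1R]
    have h1 : 0 < ((At - Pt * Ct) *ᵥ u) i := lt_of_lt_of_le (hEupos i) (hEP i)
    have h2 : 0 < ((Dt - Ct * Pt)ᵀ *ᵥ v) j := lt_of_lt_of_le (hFvpos j) (hFP j)
    have := mul_pos h1 (hvpos j)
    have := mul_pos (hupos i) h2
    linarith
  -- Z-structure of the shifted coefficient pairs
  have hEPZ : ∀ (Pt : Matrix (Fin m) (Fin n) ℝ), (∀ i j, 0 ≤ Pt i j) →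
      ∀ i j, i ≠ j → (At - Pt * Ct) i j ≤ 0 := by
    intro Pt hPt0 i j hij
    rw [Matrix.sub_apply]
    have := mul_nonneg_ent hPt0 hCt0 i j
    linarith [hAtZ i j hij]
  have hFPZ : ∀ (Pt : Matrix (Fin m) (Fin n) ℝ), (∀ i j, 0 ≤ Pt i j) →
      ∀ i j, i ≠ j → (Dt - Ct * Pt) i j ≤ 0 := by
    intro Pt hPt0 i j hij
    rw [Matrix.sub_apply]
    have := mul_nonneg_ent hCt0 hPt0 i j
    linarith [hDtZ i j hij]
  -- inverse positivity specialised to the Newton coefficient pairs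
  have RPOS : ∀ (Pt : Matrix (Fin m) (Fin n) ℝ), (∀ i j, 0 ≤ Pt i j) →
      (∀ i j, Pt i j ≤ Φt i j) → ∀ (Xt : Matrix (Fin m) (Fin n) ℝ),
      (∀ i j, 0 ≤ ((At - Pt * Ct) * Xt + Xt * (Dt - Ct * Pt)) i j) →
      ∀ i j, 0 ≤ Xt i j :=
    fun Pt h0 hΦ Xt hX =>
      sylv_nonneg (hEPZ Pt h0) (hFPZ Pt h0) hWpos (hWit Pt h0 hΦ) hX
  -- complex-vs-real comparison specialised to the Newton coefficient pairs
  have CMP : ∀ (P : Matrix (Fin m) (Fin n) ℂ) (Pt : Matrix (Fin m) (Fin n) ℝ),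
      (∀ i j, ‖P i j‖ ≤ Pt i j) → (∀ i j, 0 ≤ Pt i j) →
      (∀ i j, Pt i j ≤ Φt i j) →
      ∀ (X : Matrix (Fin m) (Fin n) ℂ) (Xt : Matrix (Fin m) (Fin n) ℝ)
        (G : Matrix (Fin m) (Fin n) ℂ) (Gt : Matrix (Fin m) (Fin n) ℝ),
      ((A - P * C) * X + X * (D - C * P) = G) →
      ((At - Pt * Ct) * Xt + Xt * (Dt - Ct * Pt) = Gt) →
      (∀ i j, ‖G i j‖ ≤ Gt i j) →
      ∀ i j, ‖X i j‖ ≤ Xt i j := by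
    intro P Pt hP hPt0 hPtΦ X Xt G Gt heqC heqR hGle
    have hPC : ∀ i j, ‖(P * C) i j‖ ≤ (Pt * Ct) i j := cabs_mul_le hP hCt
    have hCP : ∀ i j, ‖(C * P) i j‖ ≤ (Ct * Pt) i j := cabs_mul_le hCt hP
    refine sylv_cabs ?_ ?_ ?_ hWpos (hWit Pt hPt0 hPtΦ) heqC heqR hGle
    · intro i j
      have h1 := wlin_le_abs hω ((A - P * C) i i + (D - C * P) j j)
      have e : wlin ω ((A - P * C) i i + (D - C * P) j j) =
          wlin ω (A i i) - wlin ω ((P * C) i i) + (wlin ω (D j j) - wlin ω ((C * P) j j)) := by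
        rw [Matrix.sub_apply, Matrix.sub_apply, wlin_add, wlin_sub, wlin_sub]
      rw [e] at h1
      have h2 := wlin_le_abs hω ((P * C) i i)
      have h3 := wlin_le_abs hω ((C * P) j j)
      have h2' := hPC i i
      have h3' := hCP j j
      have h4 := hAtdiag i
      have h5 := hDtdiag j
      rw [Matrix.sub_apply, Matrix.sub_apply]
      linarith
    · intro i j hij
      have h1 : ‖(A - P * C) i j‖ ≤ ‖A i j‖ +
          ‖(P * C) i j‖ := by
        rw [Matrix.sub_apply]
        exact norm_sub_le _ _
      have h2 := hPC i j
      have h3 := hAtoff i j hij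
      rw [Matrix.sub_apply]
      linarith
    · intro i j hij
      have h1 : ‖(D - C * P) i j‖ ≤ ‖D i j‖ +
          ‖(C * P) i j‖ := by
        rw [Matrix.sub_apply]
        exact norm_sub_le _ _
      have h2 := hCP i j
      have h3 := hDtoff i j hij
      rw [Matrix.sub_apply]
      linarith
  -- the grand induction
  have MAIN : ∀ k, (∀ i j, 0 ≤ Φts k i j) ∧ (∀ i j, Φts k i j ≤ Φt i j) ∧
      (∀ i j, ‖Φs k i j‖ ≤ Φts k i j) ∧
      (∀ i j, ‖(Φ - Φs k) i j‖ ≤ (Φt - Φts k) i j) ∧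
      (∀ i j, Φts k i j ≤ Φts (k + 1) i j) ∧
      (∀ i j, ‖(Φs (k + 1) - Φs k) i j‖ ≤ (Φts (k + 1) - Φts k) i j) := by
    intro k
    induction k with
    | zero =>
      have a0 : ∀ i j, 0 ≤ Φts 0 i j := by intro i j; rw [hΦts0]; exact le_refl 0
      have b0 : ∀ i j, Φts 0 i j ≤ Φt i j := by intro i j; rw [hΦts0]; exact hΦtPos i j
      have c0 : ∀ i j, ‖Φs 0 i j‖ ≤ Φts 0 i j := by
        intro i j; rw [hΦs0, hΦts0]; simp
      have e0' : ∀ i j, 0 ≤ Φts (0 + 1) i j := by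
        refine RPOS (Φts 0) a0 b0 (Φts (0 + 1)) ?_
        intro i j
        rw [hΦts 0]
        rw [hΦts0]
        simp only [Matrix.zero_mul, Matrix.mul_zero, Matrix.sub_apply, Matrix.zero_apply,
          sub_zero]
        exact hBt0 i j
      have f0' : ∀ i j, ‖Φs (0 + 1) i j‖ ≤ Φts (0 + 1) i j := by
        refine CMP (Φs 0) (Φts 0) c0 a0 b0 (Φs (0 + 1)) (Φts (0 + 1)) _ _ (hΦs 0) (hΦts 0) ?_
        intro i j
        rw [hΦs0, hΦts0]
        simp only [Matrix.zero_mul, Matrix.mul_zero, Matrix.sub_apply, Matrix.zero_apply,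
          sub_zero]
        exact hBt i j
      refine ⟨a0, b0, c0, ?_, ?_, ?_⟩
      · intro i j
        rw [hΦs0, hΦts0, sub_zero, sub_zero]
        exact hΦle i j
      · intro i j
        rw [hΦts0]
        exact e0' i j
      · intro i j
        rw [hΦs0, hΦts0, sub_zero, sub_zero]
        exact f0' i j
    | succ k ih =>
      obtain ⟨ha, hb, hc, hd, he, hf⟩ := ih
      have hsub0 : ∀ i j, 0 ≤ (Φt - Φts k) i j := by
        intro i j; rw [Matrix.sub_apply]; linarith [hb i j]
      have a' : ∀ i j, 0 ≤ Φts (k + 1) i j := fun i j => le_trans (ha i j) (he i j)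
      have b' : ∀ i j, Φts (k + 1) i j ≤ Φt i j := by
        have h0 : ∀ i j, 0 ≤ (Φt - Φts (k + 1)) i j := by
          refine RPOS (Φts k) ha hb (Φt - Φts (k + 1)) ?_
          intro i j
          rw [newton_sol hΦtSol (hΦts k)]
          exact mul_nonneg_ent (mul_nonneg_ent hsub0 hCt0) hsub0 i j
        intro i j
        have := h0 i j
        rw [Matrix.sub_apply] at this
        linarith
      have c' : ∀ i j, ‖Φs (k + 1) i j‖ ≤ Φts (k + 1) i j := by
        intro i j
        have e1 : Φs (k + 1) i j = (Φs (k + 1) - Φs k) i j + Φs k i j := by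
          rw [Matrix.sub_apply]; ring
        rw [e1]
        refine le_trans (norm_add_le _ _) ?_
        have h1 : ‖(Φs (k + 1) - Φs k) i j‖ ≤ Φts (k + 1) i j - Φts k i j :=
          hf i j
        have h2 := hc i j
        linarith
      have d' : ∀ i j, ‖(Φ - Φs (k + 1)) i j‖ ≤ (Φt - Φts (k + 1)) i j := by
        refine CMP (Φs k) (Φts k) hc ha hb (Φ - Φs (k + 1)) (Φt - Φts (k + 1)) _ _
          (newton_sol hΦSol (hΦs k)) (newton_sol hΦtSol (hΦts k)) ?_
        exact cabs_mul_le (cabs_mul_le hd hCt) hd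
      have e' : ∀ i j, Φts (k + 1) i j ≤ Φts (k + 1 + 1) i j := by
        have h0 : ∀ i j, 0 ≤ (Φts (k + 1 + 1) - Φts (k + 1)) i j := by
          refine RPOS (Φts (k + 1)) a' b' (Φts (k + 1 + 1) - Φts (k + 1)) ?_
          intro i j
          rw [newton_newton (hΦts k) (hΦts (k + 1))]
          have hsub1 : ∀ i j, 0 ≤ (Φts (k + 1) - Φts k) i j := by
            intro i j; rw [Matrix.sub_apply]; linarith [he i j]
          exact mul_nonneg_ent (mul_nonneg_ent hsub1 hCt0) hsub1 i j
        intro i j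
        have := h0 i j
        rw [Matrix.sub_apply] at this
        linarith
      have f' : ∀ i j, ‖(Φs (k + 1 + 1) - Φs (k + 1)) i j‖ ≤
          (Φts (k + 1 + 1) - Φts (k + 1)) i j := by
        refine CMP (Φs (k + 1)) (Φts (k + 1)) c' a' b'
          (Φs (k + 1 + 1) - Φs (k + 1)) (Φts (k + 1 + 1) - Φts (k + 1)) _ _
          (newton_newton (hΦs k) (hΦs (k + 1))) (newton_newton (hΦts k) (hΦts (k + 1))) ?_
        exact cabs_mul_le (cabs_mul_le hf hCt) hf
      exact ⟨a', b', c', d', e', f'⟩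
  -- conclusion
  refine ⟨fun k => (MAIN k).2.2.2.1, ?_⟩
  have hmonoT : ∀ i j, Monotone fun k => Φts k i j := fun i j =>
    monotone_nat_of_le_succ fun k => (MAIN k).2.2.2.2.1 i j
  have hbddT : ∀ i j, BddAbove (Set.range fun k => Φts k i j) := by
    intro i j
    refine ⟨Φt i j, ?_⟩
    rintro x ⟨k, rfl⟩
    exact (MAIN k).2.1 i j
  set LT : Matrix (Fin m) (Fin n) ℝ := Matrix.of fun i j => ⨆ k, Φts k i j with hLTdef
  have hLTT : ∀ i j, Tendsto (fun k => Φts k i j) atTop (nhds (LT i j)) := fun i j =>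
    tendsto_atTop_ciSup (hmonoT i j) (hbddT i j)
  have hG1cont : Continuous (fun p : Matrix (Fin m) (Fin n) ℝ × Matrix (Fin m) (Fin n) ℝ =>
      (At - p.1 * Ct) * p.2 + p.2 * (Dt - Ct * p.1) - (Bt - p.1 * Ct * p.1)) := by
    refine Continuous.sub (Continuous.add ?_ ?_) (Continuous.sub continuous_const ?_)
    · exact (continuous_const.sub (continuous_fst.matrix_mul continuous_const)).matrix_mul
        continuous_snd
    · exact continuous_snd.matrix_mul
        (continuous_const.sub (continuous_const.matrix_mul continuous_fst))
    · exact (continuous_fst.matrix_mul continuous_const).matrix_mul continuous_fst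
  have hLTeq0 := KEY Φts LT _ hG1cont hLTT (fun k => by
    rw [sub_eq_zero]
    exact hΦts k)
  have hLTsol : LT * Ct * LT - LT * Dt - At * LT + Bt = 0 := by
    have e : LT * Ct * LT - LT * Dt - At * LT + Bt =
        -((At - LT * Ct) * LT + LT * (Dt - Ct * LT) - (Bt - LT * Ct * LT)) := by
      simp only [Matrix.sub_mul, Matrix.mul_sub, Matrix.mul_assoc]
      abel
    rw [e, hLTeq0, neg_zero]
  have hLT0 : ∀ i j, 0 ≤ LT i j := by
    intro i j
    have h1 := le_ciSup (hbddT i j) 0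
    rw [hΦts0] at h1
    exact le_trans (le_refl 0) h1
  have hLTle : ∀ i j, LT i j ≤ Φt i j := by
    intro i j
    exact ciSup_le fun k => (MAIN k).2.1 i j
  have hΦtLT := hΦtMin LT hLT0 hLTsol
  have hTend : ∀ i j, Tendsto (fun k => Φts k i j) atTop (nhds (Φt i j)) := by
    intro i j
    have : LT i j = Φt i j := le_antisymm (hLTle i j) (hΦtLT i j)
    rw [← this]
    exact hLTT i j
  intro i j
  have hdist : ∀ k, dist (Φs k i j) (Φ i j) ≤ (Φt - Φts k) i j := by
    intro k
    rw [Complex.dist_eq]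
    have h1 := (MAIN k).2.2.2.1 i j
    rw [Matrix.sub_apply] at h1
    rw [norm_sub_rev]
    exact h1
  have hg : Tendsto (fun k => (Φt - Φts k) i j) atTop (nhds 0) := by
    have h1 : Tendsto (fun k : ℕ => Φt i j - Φts k i j) atTop
        (nhds (Φt i j - Φt i j)) := Tendsto.sub tendsto_const_nhds (hTend i j)
    rw [sub_self] at h1
    exact h1
  exact tendsto_iff_dist_tendsto_zero.mpr
    (squeeze_zero (fun k => dist_nonneg) hdist hg)
end
end

section
/- Let Φ, H, F′ ∈ C^{m×n}, Ψ, G ∈ C^{n×m}, E ∈ C^{n×n}, F ∈ C^{m×m}, R′ ∈ C^{n×n}, S′ ∈ C^{m×m} be complex matrices such that [[E, 0], [−H, I]]·[I; Φ] = [[I, −G], [0, F]]·[I; Φ]·R′ and [[E, 0], [−H, I]]·[Ψ; I]·S′ = [[I, −G], [0, F]]·[Ψ; I] (block-matrix identities, where [I; Φ] and [Ψ; I] are block column matrices). Then Φ − H = (I − HΨ)·S′·Φ·R′ and Ψ − G = (I − GΦ)·R′·Ψ·S′. -/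
open Matrix Filter Kronecker

noncomputable section

/-- the defining invariant of doubling algorithms: from the two block identities
one obtains `Φ − H = (I − HΨ)S′ΦR′` and `Ψ − G = (I − GΦ)R′ΨS′`. -/
theorem stmt11 {m n : ℕ}
    (Φ H : Matrix (Fin m) (Fin n) ℂ) (Ψ G : Matrix (Fin n) (Fin m) ℂ)
    (E : Matrix (Fin n) (Fin n) ℂ) (F : Matrix (Fin m) (Fin m) ℂ)
    (R' : Matrix (Fin n) (Fin n) ℂ) (S' : Matrix (Fin m) (Fin m) ℂ)
    (h1 : Matrix.fromBlocks E 0 (-H) (1 : Matrix (Fin m) (Fin m) ℂ) *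
        Matrix.fromRows (1 : Matrix (Fin n) (Fin n) ℂ) Φ =
      Matrix.fromBlocks (1 : Matrix (Fin n) (Fin n) ℂ) (-G) 0 F *
        Matrix.fromRows (1 : Matrix (Fin n) (Fin n) ℂ) Φ * R')
    (h2 : Matrix.fromBlocks E 0 (-H) (1 : Matrix (Fin m) (Fin m) ℂ) *
        Matrix.fromRows Ψ (1 : Matrix (Fin m) (Fin m) ℂ) * S' =
      Matrix.fromBlocks (1 : Matrix (Fin n) (Fin n) ℂ) (-G) 0 F *
        Matrix.fromRows Ψ (1 : Matrix (Fin m) (Fin m) ℂ)) :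
    Φ - H = (1 - H * Ψ) * S' * Φ * R' ∧ Ψ - G = (1 - G * Φ) * R' * Ψ * S' := by
  rw [Matrix.fromBlocks_mul_fromRows, Matrix.fromBlocks_mul_fromRows,
    Matrix.fromRows_mul, Matrix.fromRows_ext_iff] at h1
  rw [Matrix.fromBlocks_mul_fromRows, Matrix.fromBlocks_mul_fromRows,
    Matrix.fromRows_mul, Matrix.fromRows_ext_iff] at h2
  obtain ⟨hE, hΦ⟩ := h1
  obtain ⟨hΨ, hF⟩ := h2
  simp only [Matrix.zero_mul, Matrix.mul_zero, Matrix.one_mul, Matrix.mul_one,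
    Matrix.neg_mul, Matrix.mul_neg, add_zero, zero_add] at hE hΦ hΨ hF
  constructor
  · have h : (1 - H * Ψ) * S' = F := by rw [← hF, neg_add_eq_sub]
    rw [h, ← hΦ]; abel
  · have h : (1 - G * Φ) * R' = E := by rw [hE, sub_eq_add_neg]
    rw [h, hΨ]; abel
end
end

section
/- Let A ∈ R^{n×n} be a nonsingular M-matrix written as A = D₁ − N₁ with D₁ diagonal having positive diagonal entries and N₁ ≥ 0 entrywise. Let B ∈ C^{n×n} be written as B = D₂ − N₂ with D₂ diagonal. If D₁ ≤ |D₂| and |N₂| ≤ N₁ entrywise, then B is nonsingular and, with C = |D₁D₂⁻¹|, both |B⁻¹| ≤ A⁻¹C and |B⁻¹| ≤ CA⁻¹ hold entrywise. -/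
open Matrix Filter Kronecker

noncomputable section

/-- Positivity principle: if `P ≥ 0`, `P *ᵥ u < u` with `u > 0`, and `P *ᵥ w ≤ w`, then `w ≥ 0`. -/
lemma lemA {n : ℕ} (P : Matrix (Fin n) (Fin n) ℝ) (hP : ∀ i j, 0 ≤ P i j)
    (u : Fin n → ℝ) (hu : ∀ i, 0 < u i) (hPu : ∀ i, (P *ᵥ u) i < u i)
    (w : Fin n → ℝ) (hw : ∀ i, (P *ᵥ w) i ≤ w i) : ∀ i, 0 ≤ w i := by
  by_contra h
  push_neg at h
  obtain ⟨i₁, hi₁⟩ := h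
  obtain ⟨i₀, -, hmin⟩ := Finset.exists_min_image Finset.univ (fun i => w i / u i)
    ⟨i₁, Finset.mem_univ i₁⟩
  set m := w i₀ / u i₀ with hm_def
  have hm : m < 0 :=
    lt_of_le_of_lt (hmin i₁ (Finset.mem_univ i₁)) (div_neg_of_neg_of_pos hi₁ (hu i₁))
  have hwge : ∀ j, m * u j ≤ w j := by
    intro j
    have h1 : m ≤ w j / u j := hmin j (Finset.mem_univ j)
    nlinarith [hu j, (div_mul_cancel₀ (w j) (ne_of_gt (hu j)) : w j / u j * u j = w j)]
  have h1 : m * (P *ᵥ u) i₀ ≤ (P *ᵥ w) i₀ := by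
    simp only [mulVec, dotProduct, Finset.mul_sum]
    apply Finset.sum_le_sum
    intro j _
    calc m * (P i₀ j * u j) = P i₀ j * (m * u j) := by ring
      _ ≤ P i₀ j * w j := mul_le_mul_of_nonneg_left (hwge j) (hP i₀ j)
  have h2 : m * u i₀ < m * (P *ᵥ u) i₀ := by nlinarith [hPu i₀]
  have h3 : m * u i₀ = w i₀ := div_mul_cancel₀ (w i₀) (ne_of_gt (hu i₀))
  linarith [hw i₀]

/-- Injectivity: if `|Q| ≤ P` entrywise and `P *ᵥ u < u` with `u > 0`, then `det (1 - Q) ≠ 0`. -/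
lemma lemB {n : ℕ} (P : Matrix (Fin n) (Fin n) ℝ) (Q : Matrix (Fin n) (Fin n) ℂ)
    (hPQ : ∀ i j, ‖Q i j‖ ≤ P i j)
    (u : Fin n → ℝ) (hu : ∀ i, 0 < u i) (hPu : ∀ i, (P *ᵥ u) i < u i) :
    (1 - Q).det ≠ 0 := by
  intro hdet
  obtain ⟨x, hx, hxz⟩ := Matrix.exists_mulVec_eq_zero_iff.mpr hdet
  obtain ⟨i₁, hi₁⟩ := Function.ne_iff.mp hx
  obtain ⟨i₀, -, hmax⟩ := Finset.exists_max_image Finset.univ (fun i => ‖x i‖ / u i)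
    ⟨i₁, Finset.mem_univ i₁⟩
  set t := ‖x i₀‖ / u i₀ with ht_def
  have ht : 0 < t :=
    lt_of_lt_of_le (div_pos (norm_pos_iff.mpr hi₁) (hu i₁)) (hmax i₁ (Finset.mem_univ i₁))
  have hxle : ∀ j, ‖x j‖ ≤ t * u j := by
    intro j
    have h1 : ‖x j‖ / u j ≤ t := hmax j (Finset.mem_univ j)
    nlinarith [hu j, (div_mul_cancel₀ (‖x j‖) (ne_of_gt (hu j)))]
  have hQx : Q *ᵥ x = x := by
    have : (1 - Q) *ᵥ x = x - Q *ᵥ x := by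
      rw [Matrix.sub_mulVec, Matrix.one_mulVec]
    rw [this] at hxz
    linear_combination (norm := module) -hxz
  have hkey : ‖x i₀‖ < ‖x i₀‖ := by
    conv_lhs => rw [← hQx]
    calc ‖(Q *ᵥ x) i₀‖
        ≤ ∑ j, ‖Q i₀ j * x j‖ := norm_sum_le (E := ℂ) _ _
      _ ≤ ∑ j, P i₀ j * (t * u j) := by
          apply Finset.sum_le_sum
          intro j _
          rw [norm_mul]
          exact mul_le_mul (hPQ i₀ j) (hxle j) (norm_nonneg _)
            (le_trans (norm_nonneg _) (hPQ i₀ j))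
      _ = t * (P *ᵥ u) i₀ := by
          simp only [mulVec, dotProduct, Finset.mul_sum]; congr 1; ext j; ring
      _ < t * u i₀ := by exact (mul_lt_mul_iff_right₀ ht).mpr (hPu i₀)
      _ = ‖x i₀‖ := div_mul_cancel₀ _ (ne_of_gt (hu i₀))
  exact absurd hkey (lt_irrefl _)

/-- Comparison bound: `|(1-Q)⁻¹| ≤ (1-P)⁻¹` entrywise. -/
lemma lemC {n : ℕ} (P : Matrix (Fin n) (Fin n) ℝ) (Q : Matrix (Fin n) (Fin n) ℂ)
    (hPQ : ∀ i j, ‖Q i j‖ ≤ P i j)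
    (u : Fin n → ℝ) (hu : ∀ i, 0 < u i) (hPu : ∀ i, (P *ᵥ u) i < u i) :
    (1 - Q).det ≠ 0 ∧ (1 - P).det ≠ 0 ∧
      ∀ i j, ‖(1 - Q)⁻¹ i j‖ ≤ (1 - P)⁻¹ i j := by
  have hP : ∀ i j, 0 ≤ P i j := fun i j =>
    le_trans (norm_nonneg _) (hPQ i j)
  have hdetQ : (1 - Q).det ≠ 0 := lemB P Q hPQ u hu hPu
  have hdetPC : (1 - P.map (Complex.ofReal)).det ≠ 0 := by
    apply lemB P _ _ u hu hPu
    intro i j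
    simp only [Matrix.map_apply, Complex.norm_real, Real.norm_eq_abs]
    rw [abs_of_nonneg (hP i j)]
  have hdetP : (1 - P).det ≠ 0 := by
    intro h
    apply hdetPC
    have hmap : (1 : Matrix (Fin n) (Fin n) ℂ) - P.map Complex.ofReal
        = ((1 - P).map Complex.ofReal) := by
      ext i j
      by_cases hij : i = j <;>
        simp [Matrix.sub_apply, Matrix.map_apply, Matrix.one_apply, hij]
    rw [hmap]
    have hdm := RingHom.map_det Complex.ofRealHom (1 - P)
    rw [h, map_zero, RingHom.mapMatrix_apply] at hdm
    exact hdm.symm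
  refine ⟨hdetQ, hdetP, fun i j => ?_⟩
  have hQu : IsUnit (1 - Q).det := isUnit_iff_ne_zero.mpr hdetQ
  have hPu' : IsUnit (1 - P).det := isUnit_iff_ne_zero.mpr hdetP
  set S := (1 - Q)⁻¹ with hSdef
  set T := (1 - P)⁻¹ with hTdef
  have hS : S = Q * S + 1 := by
    have h := Matrix.mul_nonsing_inv (1 - Q) hQu
    rw [sub_mul, one_mul, ← hSdef, sub_eq_iff_eq_add] at h
    exact h.trans (add_comm _ _)
  have hT : T = P * T + 1 := by
    have h := Matrix.mul_nonsing_inv (1 - P) hPu'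
    rw [sub_mul, one_mul, ← hTdef, sub_eq_iff_eq_add] at h
    exact h.trans (add_comm _ _)
  set w : Fin n → ℝ := fun i => T i j - ‖S i j‖ with hwdef
  have hw : ∀ i, (P *ᵥ w) i ≤ w i := by
    intro i
    have hTe : T i j = (P * T) i j + (if i = j then (1:ℝ) else 0) := by
      conv_lhs => rw [hT]
      simp [Matrix.add_apply, Matrix.one_apply]
    have hSe : S i j = (Q * S) i j + (if i = j then (1:ℂ) else 0) := by
      conv_lhs => rw [hS]
      simp [Matrix.add_apply, Matrix.one_apply]
    have hSabs : ‖S i j‖ ≤ (∑ k, P i k * ‖S k j‖)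
        + (if i = j then (1:ℝ) else 0) := by
      rw [hSe]
      refine le_trans (norm_add_le _ _) (add_le_add ?_ ?_)
      · rw [Matrix.mul_apply]
        refine le_trans (norm_sum_le _ _) (Finset.sum_le_sum fun k _ => ?_)
        rw [norm_mul]
        exact mul_le_mul_of_nonneg_right (hPQ i k) (norm_nonneg _)
      · by_cases hij : i = j <;> simp [hij]
    have hPw : (P *ᵥ w) i = (P * T) i j - ∑ k, P i k * ‖S k j‖ := by
      simp only [Matrix.mulVec, dotProduct, hwdef, Matrix.mul_apply, mul_sub,
        Finset.sum_sub_distrib]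
    rw [hPw, hwdef]
    simp only
    rw [hTe]
    linarith [hSabs]
  have := lemA P hP u hu hPu w hw
  have h0 := this i
  simp only [hwdef] at h0
  linarith

/-- if a nonsingular M-matrix `A = D₁ − N₁` (diagonal/nonnegative splitting)
dominates `B = D₂ − N₂` in the sense `D₁ ≤ |D₂|`, `|N₂| ≤ N₁`, then `B` is nonsingular and
`|B⁻¹| ≤ A⁻¹C` and `|B⁻¹| ≤ CA⁻¹` with `C = |D₁D₂⁻¹|`. -/
theorem stmt12 {n : ℕ} (A D₁ N₁ : Matrix (Fin n) (Fin n) ℝ)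
    (B D₂ N₂ : Matrix (Fin n) (Fin n) ℂ)
    (hA : IsNonsingMMatrix A) (hA' : A = D₁ - N₁)
    (hD₁diag : ∀ i j, i ≠ j → D₁ i j = 0) (hD₁pos : ∀ i, 0 < D₁ i i)
    (hN₁ : ∀ i j, 0 ≤ N₁ i j)
    (hB : B = D₂ - N₂) (hD₂diag : ∀ i j, i ≠ j → D₂ i j = 0)
    (h1 : ∀ i j, D₁ i j ≤ ‖D₂ i j‖)
    (h2 : ∀ i j, ‖N₂ i j‖ ≤ N₁ i j) :
    IsUnit B.det ∧
    (∀ i j, ‖B⁻¹ i j‖ ≤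
      (A⁻¹ * cabs (D₁.map Complex.ofReal * D₂⁻¹)) i j) ∧
    (∀ i j, ‖B⁻¹ i j‖ ≤
      (cabs (D₁.map Complex.ofReal * D₂⁻¹) * A⁻¹) i j) := by
  obtain ⟨-, u, hu, hAu⟩ := hA
  set d : Fin n → ℂ := fun i => D₂ i i with hd_def
  set e : Fin n → ℝ := fun i => D₁ i i with he_def
  have hD₁ : D₁ = diagonal e := by
    ext i j
    by_cases h : i = j
    · subst h; simp [he_def]
    · rw [hD₁diag i j h, Matrix.diagonal_apply_ne _ h]
  have hD₂ : D₂ = diagonal d := by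
    ext i j
    by_cases h : i = j
    · subst h; simp [hd_def]
    · rw [hD₂diag i j h, Matrix.diagonal_apply_ne _ h]
  have hepos : ∀ i, 0 < e i := fun i => hD₁pos i
  have hene : ∀ i, e i ≠ 0 := fun i => ne_of_gt (hepos i)
  have hdabs : ∀ i, e i ≤ ‖d i‖ := fun i => h1 i i
  have hdpos : ∀ i, 0 < ‖d i‖ := fun i => lt_of_lt_of_le (hepos i) (hdabs i)
  have hdne : ∀ i, d i ≠ 0 := by
    intro i h
    have := hdpos i
    rw [h, norm_zero] at this
    exact lt_irrefl _ this
  have hNu : ∀ i, (N₁ *ᵥ u) i < e i * u i := by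
    intro i
    have h := hAu i
    rw [hA', Matrix.sub_mulVec] at h
    have hD1u : (D₁ *ᵥ u) i = e i * u i := by rw [hD₁]; exact Matrix.mulVec_diagonal _ _ _
    simp only [Pi.sub_apply, hD1u] at h
    linarith
  set Q : Matrix (Fin n) (Fin n) ℂ := Matrix.of fun i j => (d i)⁻¹ * N₂ i j with hQ_def
  set P : Matrix (Fin n) (Fin n) ℝ := Matrix.of fun i j => (e i)⁻¹ * N₁ i j with hP_def
  set Q₂ : Matrix (Fin n) (Fin n) ℂ := Matrix.of fun i j => N₂ i j * (d j)⁻¹ with hQ₂_def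
  set P₂ : Matrix (Fin n) (Fin n) ℝ := Matrix.of fun i j => N₁ i j * (e j)⁻¹ with hP₂_def
  have hPQ : ∀ i j, ‖Q i j‖ ≤ P i j := by
    intro i j
    simp only [hQ_def, hP_def, Matrix.of_apply, norm_mul, norm_inv]
    apply mul_le_mul
    · exact inv_anti₀ (hepos i) (hdabs i)
    · exact h2 i j
    · exact norm_nonneg _
    · exact inv_nonneg.mpr (le_of_lt (hepos i))
  have hPQ₂ : ∀ i j, ‖Q₂ i j‖ ≤ P₂ i j := by
    intro i j
    simp only [hQ₂_def, hP₂_def, Matrix.of_apply, norm_mul, norm_inv]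
    apply mul_le_mul
    · exact h2 i j
    · exact inv_anti₀ (hepos j) (hdabs j)
    · exact inv_nonneg.mpr (norm_nonneg _)
    · exact hN₁ i j
  have hPu : ∀ i, (P *ᵥ u) i < u i := by
    intro i
    have hP1 : (P *ᵥ u) i = (e i)⁻¹ * (N₁ *ᵥ u) i := by
      simp only [Matrix.mulVec, dotProduct, hP_def, Matrix.of_apply, Finset.mul_sum,
        mul_assoc]
    have h3 : (e i)⁻¹ * (N₁ *ᵥ u) i < (e i)⁻¹ * (e i * u i) :=
      mul_lt_mul_of_pos_left (hNu i) (inv_pos.mpr (hepos i))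
    rw [inv_mul_cancel_left₀ (hene i)] at h3
    rw [hP1]; exact h3
  set u₂ : Fin n → ℝ := fun i => e i * u i with hu₂_def
  have hu₂ : ∀ i, 0 < u₂ i := fun i => mul_pos (hepos i) (hu i)
  have hPu₂ : ∀ i, (P₂ *ᵥ u₂) i < u₂ i := by
    intro i
    have hP1 : (P₂ *ᵥ u₂) i = (N₁ *ᵥ u) i := by
      simp only [Matrix.mulVec, dotProduct, hP₂_def, Matrix.of_apply, hu₂_def]
      refine Finset.sum_congr rfl fun j _ => ?_
      field_simp [hene j]
    rw [hP1, hu₂_def]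
    exact hNu i
  obtain ⟨hdetQ, hdetP, hbound⟩ := lemC P Q hPQ u hu hPu
  obtain ⟨hdetQ₂, hdetP₂, hbound₂⟩ := lemC P₂ Q₂ hPQ₂ u₂ hu₂ hPu₂
  have hdd : diagonal d * diagonal (fun i => (d i)⁻¹) = 1 := by
    rw [Matrix.diagonal_mul_diagonal,
      show (fun i => d i * (d i)⁻¹) = fun _ => (1 : ℂ) from
        funext fun i => mul_inv_cancel₀ (hdne i), Matrix.diagonal_one]
  have hee : diagonal e * diagonal (fun i => (e i)⁻¹) = 1 := by
    rw [Matrix.diagonal_mul_diagonal,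
      show (fun i => e i * (e i)⁻¹) = fun _ => (1 : ℝ) from
        funext fun i => mul_inv_cancel₀ (hene i), Matrix.diagonal_one]
  have hBfac : B = diagonal d * (1 - Q) := by
    ext i j
    rw [hB, hD₂, Matrix.diagonal_mul]
    simp only [Matrix.sub_apply, Matrix.one_apply, hQ_def, Matrix.of_apply, mul_sub]
    rw [← mul_assoc, mul_inv_cancel₀ (hdne i), one_mul]
    by_cases h : i = j <;> simp [h]
  have hAfac : A = diagonal e * (1 - P) := by
    ext i j
    rw [hA', hD₁, Matrix.diagonal_mul]
    simp only [Matrix.sub_apply, Matrix.one_apply, hP_def, Matrix.of_apply, mul_sub]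
    rw [← mul_assoc, mul_inv_cancel₀ (hene i), one_mul]
    by_cases h : i = j <;> simp [h]
  have hBfac₂ : B = (1 - Q₂) * diagonal d := by
    ext i j
    rw [hB, hD₂, Matrix.mul_diagonal]
    simp only [Matrix.sub_apply, Matrix.one_apply, hQ₂_def, Matrix.of_apply, sub_mul]
    rw [mul_assoc, inv_mul_cancel₀ (hdne j), mul_one]
    by_cases h : i = j <;> simp [h]
  have hAfac₂ : A = (1 - P₂) * diagonal e := by
    ext i j
    rw [hA', hD₁, Matrix.mul_diagonal]
    simp only [Matrix.sub_apply, Matrix.one_apply, hP₂_def, Matrix.of_apply, sub_mul]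
    rw [mul_assoc, inv_mul_cancel₀ (hene j), mul_one]
    by_cases h : i = j <;> simp [h]
  have hdetB : IsUnit B.det := by
    rw [hBfac, Matrix.det_mul, Matrix.det_diagonal]
    exact isUnit_iff_ne_zero.mpr
      (mul_ne_zero (Finset.prod_ne_zero_iff.mpr fun i _ => hdne i) hdetQ)
  have hBinv : B⁻¹ = (1 - Q)⁻¹ * diagonal (fun i => (d i)⁻¹) := by
    apply Matrix.inv_eq_right_inv
    rw [hBfac, mul_assoc, ← mul_assoc (1 - Q),
      Matrix.mul_nonsing_inv _ (isUnit_iff_ne_zero.mpr hdetQ), one_mul, hdd]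
  have hBinv₂ : B⁻¹ = diagonal (fun i => (d i)⁻¹) * (1 - Q₂)⁻¹ := by
    apply Matrix.inv_eq_right_inv
    rw [hBfac₂, mul_assoc, ← mul_assoc (diagonal d), hdd, one_mul,
      Matrix.mul_nonsing_inv _ (isUnit_iff_ne_zero.mpr hdetQ₂)]
  have hAinv : A⁻¹ = (1 - P)⁻¹ * diagonal (fun i => (e i)⁻¹) := by
    apply Matrix.inv_eq_right_inv
    rw [hAfac, mul_assoc, ← mul_assoc (1 - P),
      Matrix.mul_nonsing_inv _ (isUnit_iff_ne_zero.mpr hdetP), one_mul, hee]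
  have hAinv₂ : A⁻¹ = diagonal (fun i => (e i)⁻¹) * (1 - P₂)⁻¹ := by
    apply Matrix.inv_eq_right_inv
    rw [hAfac₂, mul_assoc, ← mul_assoc (diagonal e), hee, one_mul,
      Matrix.mul_nonsing_inv _ (isUnit_iff_ne_zero.mpr hdetP₂)]
  have hD₂inv : D₂⁻¹ = diagonal (fun i => (d i)⁻¹) := by
    apply Matrix.inv_eq_right_inv
    rw [hD₂, hdd]
  have hC : cabs (D₁.map Complex.ofReal * D₂⁻¹)
      = diagonal (fun i => e i / ‖d i‖) := by
    rw [hD₂inv, hD₁, Matrix.diagonal_map (by simp), Matrix.diagonal_mul_diagonal]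
    ext i j
    by_cases h : i = j
    · subst h
      simp only [cabs, Matrix.of_apply, Matrix.diagonal_apply_eq, norm_mul,
        norm_inv, Complex.norm_real, Real.norm_eq_abs, abs_of_pos (hepos i), div_eq_mul_inv]
    · simp [cabs, Matrix.diagonal_apply_ne _ h]
  refine ⟨hdetB, fun i j => ?_, fun i j => ?_⟩
  · rw [hBinv, hAinv, hC, Matrix.mul_diagonal, Matrix.mul_diagonal, Matrix.mul_diagonal,
      norm_mul, norm_inv]
    have heq : (1 - P)⁻¹ i j * (e j)⁻¹ * (e j / ‖d j‖)
        = (1 - P)⁻¹ i j * (‖d j‖)⁻¹ := by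
      field_simp [hene j]
    rw [heq]
    exact mul_le_mul_of_nonneg_right (hbound i j) (inv_nonneg.mpr (le_of_lt (hdpos j)))
  · rw [hBinv₂, hAinv₂, hC, Matrix.diagonal_mul, Matrix.diagonal_mul, Matrix.diagonal_mul,
      norm_mul, norm_inv]
    have heq : (e i / ‖d i‖) * ((e i)⁻¹ * (1 - P₂)⁻¹ i j)
        = (‖d i‖)⁻¹ * (1 - P₂)⁻¹ i j := by
      rw [div_eq_mul_inv,
        show e i * (‖d i‖)⁻¹ * ((e i)⁻¹ * (1 - P₂)⁻¹ i j)
          = (e i * (e i)⁻¹) * ((‖d i‖)⁻¹ * (1 - P₂)⁻¹ i j) from by ring,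
        mul_inv_cancel₀ (hene i), one_mul]
    rw [heq]
    exact mul_le_mul_of_nonneg_left (hbound₂ i j) (inv_nonneg.mpr (le_of_lt (hdpos i)))
end
end

section
/- Let ω ∈ [0,1], ϖ = ω² + (1−ω)², and for each i = 1,…,n+m let p_i > s_i > 0 and q_i = p_i − s_i ≥ 0 be reals. For c > 0 define r_i(c) = (−(c−1)p_i + √((c−1)²p_i² + 4c(p_i²−s_i²)))/(2cϖ) for i = 1,…,n and r_i(c) = ((c−1)p_i + √((c−1)²p_i² + 4c(p_i²−s_i²)))/(2cϖ) for i = n+1,…,n+m, and set η₁(c) = max_{1≤i≤n} r_i(c), η₂(c) = max_{n+1≤i≤n+m} r_i(c). If t > max{η₁(c), η₂(c)} and γ = ct, then for every i = 1,…,n: (t + p_i/ϖ)(γ − p_i/ϖ) > −s_i²/ϖ² and γ > q_i/ϖ; and for every i = n+1,…,n+m: (γ + p_i/ϖ)(t − p_i/ϖ) > −s_i²/ϖ² and t > q_i/ϖ. In particular, r_i(c) ≥ q_i/(cϖ) for i = 1,…,n and r_i(c) ≥ q_i/ϖ for i = n+1,…,n+m. -/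
open Matrix Filter Kronecker

noncomputable section

/-- `ϖ = ω² + (1−ω)²`. -/
def vpi (ω : ℝ) : ℝ := ω ^ 2 + (1 - ω) ^ 2

/-- The larger root of `c t² + (c−1)(p/ϖ) t − p²/ϖ² + s²/ϖ² = 0` (rows `i ≤ n`). -/
def rlow (ϖ p s c : ℝ) : ℝ :=
  (-(c - 1) * p + Real.sqrt ((c - 1) ^ 2 * p ^ 2 + 4 * c * (p ^ 2 - s ^ 2))) / (2 * c * ϖ)

/-- The larger root of `c t² − (c−1)(p/ϖ) t − p²/ϖ² + s²/ϖ² = 0` (rows `i > n`). -/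
def rhigh (ϖ p s c : ℝ) : ℝ :=
  ((c - 1) * p + Real.sqrt ((c - 1) ^ 2 * p ^ 2 + 4 * c * (p ^ 2 - s ^ 2))) / (2 * c * ϖ)


private lemma root_ge (a b cc x₀ : ℝ) (ha : 0 < a) (hx : a * x₀ ^ 2 + b * x₀ + cc ≤ 0) :
    x₀ ≤ (-b + Real.sqrt (b ^ 2 - 4 * a * cc)) / (2 * a) := by
  have hD : (2 * a * x₀ + b) ^ 2 ≤ b ^ 2 - 4 * a * cc := by nlinarith
  have h1 : 2 * a * x₀ + b ≤ Real.sqrt (b ^ 2 - 4 * a * cc) := by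
    calc 2 * a * x₀ + b ≤ |2 * a * x₀ + b| := le_abs_self _
      _ = Real.sqrt ((2 * a * x₀ + b) ^ 2) := (Real.sqrt_sq_eq_abs _).symm
      _ ≤ _ := Real.sqrt_le_sqrt hD
  rw [le_div_iff₀ (by positivity)]
  linarith

private lemma quad_pos (a b cc t : ℝ) (ha : 0 < a) (hD : 0 ≤ b ^ 2 - 4 * a * cc)
    (ht : (-b + Real.sqrt (b ^ 2 - 4 * a * cc)) / (2 * a) < t) :
    0 < a * t ^ 2 + b * t + cc := by
  have hs := Real.sq_sqrt hD
  have hs0 := Real.sqrt_nonneg (b ^ 2 - 4 * a * cc)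
  rw [div_lt_iff₀ (by positivity)] at ht
  have h1 : Real.sqrt (b ^ 2 - 4 * a * cc) < 2 * a * t + b := by linarith
  nlinarith [hs, h1, hs0, sq_nonneg (2 * a * t + b - Real.sqrt (b ^ 2 - 4 * a * cc))]

private lemma sqrtD_low (ϖ p s c : ℝ) (hϖ : 0 < ϖ) :
    Real.sqrt (((c - 1) * p * ϖ) ^ 2 - 4 * (c * ϖ ^ 2) * (s ^ 2 - p ^ 2))
      = ϖ * Real.sqrt ((c - 1) ^ 2 * p ^ 2 + 4 * c * (p ^ 2 - s ^ 2)) := by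
  have h : ((c - 1) * p * ϖ) ^ 2 - 4 * (c * ϖ ^ 2) * (s ^ 2 - p ^ 2)
      = ϖ ^ 2 * ((c - 1) ^ 2 * p ^ 2 + 4 * c * (p ^ 2 - s ^ 2)) := by ring
  rw [h, Real.sqrt_mul (sq_nonneg ϖ), Real.sqrt_sq hϖ.le]

private lemma low_key (ϖ p s c : ℝ) (hϖ : 0 < ϖ) (hs : 0 < s) (hps : s < p) (hc : 0 < c) :
    (p - s) / (c * ϖ) ≤ rlow ϖ p s c ∧
      ∀ t, rlow ϖ p s c < t → -(s ^ 2) / ϖ ^ 2 < (t + p / ϖ) * (c * t - p / ϖ) := by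
  set a := c * ϖ ^ 2 with ha_def
  set b := (c - 1) * p * ϖ with hb_def
  set cc := s ^ 2 - p ^ 2 with hcc_def
  have ha : 0 < a := by positivity
  have hr : rlow ϖ p s c = (-b + Real.sqrt (b ^ 2 - 4 * a * cc)) / (2 * a) := by
    have := sqrtD_low ϖ p s c hϖ
    rw [rlow, ha_def, hb_def, hcc_def, this]
    field_simp
  have hD : 0 ≤ b ^ 2 - 4 * a * cc := by
    have hb2 : b ^ 2 - 4 * a * cc = ϖ ^ 2 * ((c - 1) ^ 2 * p ^ 2 + 4 * c * (p ^ 2 - s ^ 2)) := by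
      rw [ha_def, hb_def, hcc_def]; ring
    rw [hb2]
    have hps2 : 0 < p ^ 2 - s ^ 2 := by nlinarith
    nlinarith [sq_nonneg ((c - 1) * p), sq_nonneg ϖ, mul_pos hc hps2, sq_nonneg (ϖ * (c - 1) * p)]
  constructor
  · rw [hr]
    apply root_ge a b cc _ ha
    rw [ha_def, hb_def, hcc_def]
    have h1 : a * ((p - s) / (c * ϖ)) ^ 2 + b * ((p - s) / (c * ϖ)) + cc
        = -((p - s) * s * (1 + c) / c) := by
      rw [ha_def, hb_def, hcc_def]; field_simp; ring
    rw [ha_def, hb_def, hcc_def] at h1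
    rw [h1]
    have : 0 ≤ (p - s) * s * (1 + c) / c :=
      le_of_lt (div_pos (mul_pos (mul_pos (by linarith) hs) (by linarith)) hc)
    linarith
  · intro t htt
    rw [hr] at htt
    have := quad_pos a b cc t ha hD htt
    rw [ha_def, hb_def, hcc_def] at this
    rw [div_lt_iff₀ (by positivity : (0:ℝ) < ϖ ^ 2)] at *
    have hexp : (t + p / ϖ) * (c * t - p / ϖ) * ϖ ^ 2
        = c * ϖ ^ 2 * t ^ 2 + (c - 1) * p * ϖ * t - p ^ 2 := by field_simp; ring
    rw [hexp]; linarith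

private lemma sqrtD_high (ϖ p s c : ℝ) (hϖ : 0 < ϖ) :
    Real.sqrt ((-((c - 1) * p * ϖ)) ^ 2 - 4 * (c * ϖ ^ 2) * (s ^ 2 - p ^ 2))
      = ϖ * Real.sqrt ((c - 1) ^ 2 * p ^ 2 + 4 * c * (p ^ 2 - s ^ 2)) := by
  have h : (-((c - 1) * p * ϖ)) ^ 2 - 4 * (c * ϖ ^ 2) * (s ^ 2 - p ^ 2)
      = ϖ ^ 2 * ((c - 1) ^ 2 * p ^ 2 + 4 * c * (p ^ 2 - s ^ 2)) := by ring
  rw [h, Real.sqrt_mul (sq_nonneg ϖ), Real.sqrt_sq hϖ.le]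

private lemma high_key (ϖ p s c : ℝ) (hϖ : 0 < ϖ) (hs : 0 < s) (hps : s < p) (hc : 0 < c) :
    (p - s) / ϖ ≤ rhigh ϖ p s c ∧
      ∀ t, rhigh ϖ p s c < t → -(s ^ 2) / ϖ ^ 2 < (c * t + p / ϖ) * (t - p / ϖ) := by
  set a := c * ϖ ^ 2 with ha_def
  set b := -((c - 1) * p * ϖ) with hb_def
  set cc := s ^ 2 - p ^ 2 with hcc_def
  have ha : 0 < a := by positivity
  have hr : rhigh ϖ p s c = (-b + Real.sqrt (b ^ 2 - 4 * a * cc)) / (2 * a) := by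
    have := sqrtD_high ϖ p s c hϖ
    rw [rhigh, ha_def, hb_def, hcc_def, this]
    field_simp
  have hD : 0 ≤ b ^ 2 - 4 * a * cc := by
    have hb2 : b ^ 2 - 4 * a * cc = ϖ ^ 2 * ((c - 1) ^ 2 * p ^ 2 + 4 * c * (p ^ 2 - s ^ 2)) := by
      rw [ha_def, hb_def, hcc_def]; ring
    rw [hb2]
    have hps2 : 0 < p ^ 2 - s ^ 2 := by nlinarith
    nlinarith [sq_nonneg ((c - 1) * p), sq_nonneg ϖ, mul_pos hc hps2, sq_nonneg (ϖ * (c - 1) * p)]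
  constructor
  · rw [hr]
    apply root_ge a b cc _ ha
    have h1 : a * ((p - s) / ϖ) ^ 2 + b * ((p - s) / ϖ) + cc
        = -((p - s) * s * (1 + c)) := by
      rw [ha_def, hb_def, hcc_def]; field_simp; ring
    rw [h1]
    have : 0 ≤ (p - s) * s * (1 + c) := le_of_lt (mul_pos (mul_pos (by linarith) hs) (by linarith))
    linarith
  · intro t htt
    rw [hr] at htt
    have := quad_pos a b cc t ha hD htt
    rw [ha_def, hb_def, hcc_def] at this
    rw [div_lt_iff₀ (by positivity : (0:ℝ) < ϖ ^ 2)] at *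
    have hexp : (c * t + p / ϖ) * (t - p / ϖ) * ϖ ^ 2
        = c * ϖ ^ 2 * t ^ 2 + -((c - 1) * p * ϖ) * t - p ^ 2 := by field_simp; ring
    rw [hexp]; linarith

/-- if `t > max{η₁(c), η₂(c)}` and `γ = ct`, then the ADDA parameter conditions
(30)-(31) hold for every row; in particular `r_i(c) ≥ q_i/(cϖ)` resp. `r_i(c) ≥ q_i/ϖ`. -/
theorem stmt16 {n m : ℕ} (ω : ℝ) (hω : ω ∈ Set.Icc (0 : ℝ) 1)
    (p s : Fin n ⊕ Fin m → ℝ)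
    (hs : ∀ i, 0 < s i) (hps : ∀ i, s i < p i) (hq : ∀ i, 0 ≤ p i - s i)
    (c t γ : ℝ) (hc : 0 < c) (hγ : γ = c * t)
    (ht : max (⨆ i : Fin n, rlow (vpi ω) (p (Sum.inl i)) (s (Sum.inl i)) c)
        (⨆ i : Fin m, rhigh (vpi ω) (p (Sum.inr i)) (s (Sum.inr i)) c) < t) :
    (∀ i : Fin n,
      -(s (Sum.inl i)) ^ 2 / (vpi ω) ^ 2 <
        (t + p (Sum.inl i) / vpi ω) * (γ - p (Sum.inl i) / vpi ω) ∧
      (p (Sum.inl i) - s (Sum.inl i)) / vpi ω < γ) ∧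
    (∀ i : Fin m,
      -(s (Sum.inr i)) ^ 2 / (vpi ω) ^ 2 <
        (γ + p (Sum.inr i) / vpi ω) * (t - p (Sum.inr i) / vpi ω) ∧
      (p (Sum.inr i) - s (Sum.inr i)) / vpi ω < t) ∧
    (∀ i : Fin n, (p (Sum.inl i) - s (Sum.inl i)) / (c * vpi ω) ≤
      rlow (vpi ω) (p (Sum.inl i)) (s (Sum.inl i)) c) ∧
    (∀ i : Fin m, (p (Sum.inr i) - s (Sum.inr i)) / vpi ω ≤
      rhigh (vpi ω) (p (Sum.inr i)) (s (Sum.inr i)) c) := by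
  have hϖ : 0 < vpi ω := by unfold vpi; nlinarith [sq_nonneg ω, sq_nonneg (1 - ω), sq_nonneg (2 * ω - 1)]
  have hlow : ∀ i : Fin n, rlow (vpi ω) (p (Sum.inl i)) (s (Sum.inl i)) c < t := by
    intro i
    refine lt_of_le_of_lt (le_trans ?_ (le_max_left _ _)) ht
    exact le_ciSup (f := fun i : Fin n => rlow (vpi ω) (p (Sum.inl i)) (s (Sum.inl i)) c)
      (Set.Finite.bddAbove (Set.finite_range _)) i
  have hhigh : ∀ i : Fin m, rhigh (vpi ω) (p (Sum.inr i)) (s (Sum.inr i)) c < t := by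
    intro i
    refine lt_of_le_of_lt (le_trans ?_ (le_max_right _ _)) ht
    exact le_ciSup (f := fun i : Fin m => rhigh (vpi ω) (p (Sum.inr i)) (s (Sum.inr i)) c)
      (Set.Finite.bddAbove (Set.finite_range _)) i
  have hL := fun i : Fin n => low_key (vpi ω) (p (Sum.inl i)) (s (Sum.inl i)) c hϖ
    (hs _) (hps _) hc
  have hH := fun i : Fin m => high_key (vpi ω) (p (Sum.inr i)) (s (Sum.inr i)) c hϖ
    (hs _) (hps _) hc
  refine ⟨fun i => ⟨?_, ?_⟩, fun i => ⟨?_, ?_⟩, fun i => (hL i).1, fun i => (hH i).1⟩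
  · rw [hγ]; exact (hL i).2 t (hlow i)
  · rw [hγ]
    have h1 : (p (Sum.inl i) - s (Sum.inl i)) / (c * vpi ω) < t :=
      lt_of_le_of_lt (hL i).1 (hlow i)
    rw [div_lt_iff₀ (by positivity)] at h1
    rw [div_lt_iff₀ hϖ]
    nlinarith
  · rw [hγ]; exact (hH i).2 t (hhigh i)
  · exact lt_of_le_of_lt (hH i).1 (hhigh i)
end
end
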